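/- arXiv:2406.05045 — 7 statements merged into one kernel-verified Lean document; each statement's English description precedes it below -/
import Mathlib

section
/- Assume n ≤ d and let σ : ℝ → ℝ be real analytic and invertible (bijective). Then for every R < R_typ-max(n,d,n), the inclusion H_CPBIRNN(R,n) ⊊ H_CPBIRNN(R+1,n) is strict (both sides taken with the same d and the same σ). -/
open Matrix MeasureTheory

noncomputable section

/-- The CP tensor `[[A,B,C]]`. -/
def cpT {d1 d2 d3 R : ℕ} (A : Matrix (Fin d1) (Fin R) ℝ) (B : Matrix (Fin d2) (Fin R) ℝ)
    (C : Matrix (Fin d3) (Fin R) ℝ) : Fin d1 → Fin d2 → Fin d3 → ℝ :=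
  fun i j k => ∑ r, A i r * B j r * C k r

/-- `(T ×₁ u ×₂ v)` for a third order tensor `T`. -/
def modeProd {d1 d2 d3 : ℕ} (T : Fin d1 → Fin d2 → Fin d3 → ℝ) (u : Fin d1 → ℝ)
    (v : Fin d2 → ℝ) : Fin d3 → ℝ :=
  fun k => ∑ i, ∑ j, T i j k * u i * v j

/-- The CP rank of a tensor: the minimal `R` admitting a rank-`R` CP decomposition. -/
def cprank {d1 d2 d3 : ℕ} (T : Fin d1 → Fin d2 → Fin d3 → ℝ) : ℕ :=
  sInf {R : ℕ | ∃ (A : Matrix (Fin d1) (Fin R) ℝ) (B : Matrix (Fin d2) (Fin R) ℝ)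
    (C : Matrix (Fin d3) (Fin R) ℝ), T = cpT A B C}

/-- The maximal CP rank of tensors in `ℝ^{d1×d2×d3}`. -/
def Rmax (d1 d2 d3 : ℕ) : ℕ :=
  sSup {r : ℕ | ∃ T : Fin d1 → Fin d2 → Fin d3 → ℝ, cprank T = r}

/-- `R` is a typical rank if the set of tensors of CP rank `R` has positive Lebesgue measure. -/
def IsTypicalRank (d1 d2 d3 R : ℕ) : Prop :=
  0 < volume {T : Fin d1 → Fin d2 → Fin d3 → ℝ | cprank T = R}

/-- The maximal typical CP rank. -/
def RtypMax (d1 d2 d3 : ℕ) : ℕ := sSup {R : ℕ | IsTypicalRank d1 d2 d3 R}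

/-- Hidden states of a CPRNN; `x t` is the input at time `t+1`. -/
def cprnnStates {n d R : ℕ} (σ : ℝ → ℝ) (h0 : Fin n → ℝ)
    (A : Matrix (Fin n) (Fin R) ℝ) (B : Matrix (Fin d) (Fin R) ℝ) (C : Matrix (Fin n) (Fin R) ℝ)
    (U : Matrix (Fin n) (Fin d) ℝ) (V : Matrix (Fin n) (Fin n) ℝ) (b : Fin n → ℝ)
    (x : ℕ → Fin d → ℝ) : ℕ → Fin n → ℝ
  | 0 => h0
  | t + 1 => fun k =>
      σ (modeProd (cpT A B C) (cprnnStates σ h0 A B C U V b x t) (x t) k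
        + V.mulVec (cprnnStates σ h0 A B C U V b x t) k + U.mulVec (x t) k + b k)

/-- Hidden states of a CPBIRNN (second-order term only). -/
def cpbirnnStates {n d R : ℕ} (σ : ℝ → ℝ) (h0 : Fin n → ℝ)
    (A : Matrix (Fin n) (Fin R) ℝ) (B : Matrix (Fin d) (Fin R) ℝ) (C : Matrix (Fin n) (Fin R) ℝ)
    (x : ℕ → Fin d → ℝ) : ℕ → Fin n → ℝ
  | 0 => h0
  | t + 1 => fun k =>
      σ (modeProd (cpT A B C) (cpbirnnStates σ h0 A B C x t) (x t) k)

/-- Hidden states of a 2RNN with arbitrary second-order tensor. -/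
def rnn2States {n d : ℕ} (σ : ℝ → ℝ) (h0 : Fin n → ℝ) (T : Fin n → Fin d → Fin n → ℝ)
    (U : Matrix (Fin n) (Fin d) ℝ) (V : Matrix (Fin n) (Fin n) ℝ) (b : Fin n → ℝ)
    (x : ℕ → Fin d → ℝ) : ℕ → Fin n → ℝ
  | 0 => h0
  | t + 1 => fun k =>
      σ (modeProd T (rnn2States σ h0 T U V b x t) (x t) k
        + V.mulVec (rnn2States σ h0 T U V b x t) k + U.mulVec (x t) k + b k)

/-- Hidden states of a MIRNN. -/
def mirnnStates {n d : ℕ} (σ : ℝ → ℝ) (h0 α β1 β2 b : Fin n → ℝ)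
    (U : Matrix (Fin n) (Fin d) ℝ) (V : Matrix (Fin n) (Fin n) ℝ)
    (x : ℕ → Fin d → ℝ) : ℕ → Fin n → ℝ
  | 0 => h0
  | t + 1 => fun k =>
      σ (α k * V.mulVec (mirnnStates σ h0 α β1 β2 b U V x t) k * U.mulVec (x t) k
        + β1 k * V.mulVec (mirnnStates σ h0 α β1 β2 b U V x t) k
        + β2 k * U.mulVec (x t) k + b k)

/-- The class of functions computed by CPRNNs of rank `R` and hidden size `n`
(mapping the input sequence `x¹,x²,…` to the hidden state sequence `h¹,h²,…`). -/
def HCPRNN (d n R : ℕ) (σ : ℝ → ℝ) : Set ((ℕ → Fin d → ℝ) → ℕ → Fin n → ℝ) :=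
  {h | ∃ (h0 : Fin n → ℝ) (A : Matrix (Fin n) (Fin R) ℝ) (B : Matrix (Fin d) (Fin R) ℝ)
      (C : Matrix (Fin n) (Fin R) ℝ) (U : Matrix (Fin n) (Fin d) ℝ)
      (V : Matrix (Fin n) (Fin n) ℝ) (b : Fin n → ℝ),
      ∀ x t, h x t = cprnnStates σ h0 A B C U V b x (t + 1)}

/-- The class of functions computed by CPBIRNNs of rank `R` and hidden size `n`. -/
def HCPBIRNN (d n R : ℕ) (σ : ℝ → ℝ) : Set ((ℕ → Fin d → ℝ) → ℕ → Fin n → ℝ) :=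
  {h | ∃ (h0 : Fin n → ℝ) (A : Matrix (Fin n) (Fin R) ℝ) (B : Matrix (Fin d) (Fin R) ℝ)
      (C : Matrix (Fin n) (Fin R) ℝ),
      ∀ x t, h x t = cpbirnnStates σ h0 A B C x (t + 1)}

/-- The class of functions computed by 2RNNs of hidden size `n`. -/
def H2RNN (d n : ℕ) (σ : ℝ → ℝ) : Set ((ℕ → Fin d → ℝ) → ℕ → Fin n → ℝ) :=
  {h | ∃ (h0 : Fin n → ℝ) (T : Fin n → Fin d → Fin n → ℝ) (U : Matrix (Fin n) (Fin d) ℝ)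
      (V : Matrix (Fin n) (Fin n) ℝ) (b : Fin n → ℝ),
      ∀ x t, h x t = rnn2States σ h0 T U V b x (t + 1)}

/-- The class of functions computed by MIRNNs of hidden size `n`. -/
def HMIRNN (d n : ℕ) (σ : ℝ → ℝ) : Set ((ℕ → Fin d → ℝ) → ℕ → Fin n → ℝ) :=
  {h | ∃ (h0 α β1 β2 b : Fin n → ℝ) (U : Matrix (Fin n) (Fin d) ℝ)
      (V : Matrix (Fin n) (Fin n) ℝ),
      ∀ x t, h x t = mirnnStates σ h0 α β1 β2 b U V x (t + 1)}

/-- The class `L(n,q) ∘ H_CPBIRNN(R,n)`: CPBIRNNs composed with a linear output map. -/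
def LHCPBIRNN (d n q R : ℕ) (σ : ℝ → ℝ) : Set ((ℕ → Fin d → ℝ) → ℕ → Fin q → ℝ) :=
  {f | ∃ (ℓ : (Fin n → ℝ) →ₗ[ℝ] (Fin q → ℝ)) (h : (ℕ → Fin d → ℝ) → ℕ → Fin n → ℝ),
      h ∈ HCPBIRNN d n R σ ∧ ∀ x t, f x t = ℓ (h x t)}

end


section AuxLemmas


namespace CPAux
open Finset

variable {m M : ℕ}

lemma det_sum_rows (W : Finset (Fin M)) (scal u : Fin M → Fin m → ℝ) :
    (Matrix.of fun j k => ∑ r ∈ W, scal r j * u r k).det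
      = ∑ φ ∈ Fintype.piFinset (fun _ : Fin m => W),
          (∏ j, scal (φ j) j) * (Matrix.of fun j k => u (φ j) k).det := by
  have h1 : (Matrix.of fun j k => ∑ r ∈ W, scal r j * u r k)
      = fun j => ∑ r ∈ W, scal r j • u r := by
    funext j k
    simp [Finset.sum_apply]
  have h2 : (Matrix.of fun j k => ∑ r ∈ W, scal r j * u r k).det
      = Matrix.detRowAlternating (fun j => ∑ r ∈ W, scal r j • u r) := by
    rw [← h1]; rfl
  rw [h2]
  rw [show (Matrix.detRowAlternating (fun j : Fin m => ∑ r ∈ W, scal r j • u r) : ℝ)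
      = Matrix.detRowAlternating.toMultilinearMap (fun j : Fin m => ∑ r ∈ W, scal r j • u r)
      from rfl]
  rw [MultilinearMap.map_sum_finset Matrix.detRowAlternating.toMultilinearMap
      (fun j r => scal r j • u r) (fun _ => W)]
  refine Finset.sum_congr rfl fun φ _ => ?_
  have := Matrix.detRowAlternating.toMultilinearMap.map_smul_univ
      (fun j : Fin m => scal (φ j) j) (fun j => u (φ j))
  rw [this, smul_eq_mul]
  rfl

lemma det_zero_of_not_inj (φ : Fin m → Fin M) (hφ : ¬ Function.Injective φ)
    (u : Fin M → Fin m → ℝ) : (Matrix.of fun j k => u (φ j) k).det = 0 := by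
  rw [Function.not_injective_iff] at hφ
  obtain ⟨i, j, hij, hne⟩ := hφ
  exact Matrix.det_zero_of_row_eq hne (by funext k; simp [hij])

/-- Determinant of a sum of fewer than `m` rank-one matrices vanishes. -/
lemma det_rankone_sum_zero {R : ℕ} (hR : R < m) (scal u : Fin R → Fin m → ℝ) :
    (Matrix.of fun j k => ∑ r : Fin R, scal r j * u r k).det = 0 := by
  have := det_sum_rows (Finset.univ : Finset (Fin R))
      (fun r j => scal r j) (fun r k => u r k)
  rw [this]
  refine Finset.sum_eq_zero fun φ _ => ?_
  have hninj : ¬ Function.Injective φ := by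
    intro hinj
    have := Fintype.card_le_of_injective φ hinj
    simp [Fintype.card_fin] at this
    omega
  rw [det_zero_of_not_inj φ hninj]
  ring

end CPAux

namespace CPAux2
open Finset CPAux

variable {m M : ℕ}

open scoped Classical in
lemma exists_subset_det_ne_zero (scal u : Fin M → Fin m → ℝ) (s : ℕ) (hms : m ≤ s) (hsM : s ≤ M)
    (h : (Matrix.of fun j k => ∑ r : Fin M, scal r j * u r k).det ≠ 0) :
    ∃ S : Finset (Fin M), S.card = s ∧
      (Matrix.of fun j k => ∑ r ∈ S, scal r j * u r k).det ≠ 0 := by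
  set F : (Fin m → Fin M) → ℝ :=
    fun φ => (∏ j, scal (φ j) j) * (Matrix.of fun j k => u (φ j) k).det with hF
  set DI : Finset (Fin M) → ℝ :=
    fun W => ∑ φ ∈ (Fintype.piFinset fun _ : Fin m => W).filter Function.Injective, F φ with hDI
  have hDeq : ∀ W : Finset (Fin M),
      (Matrix.of fun j k => ∑ r ∈ W, scal r j * u r k).det = DI W := by
    intro W
    rw [det_sum_rows, hDI]
    symm
    refine Finset.sum_subset (Finset.filter_subset _ _) ?_
    intro φ hφ hnφ
    have hni : ¬ Function.Injective φ := by
      simp only [Finset.mem_filter] at hnφ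
      tauto
    rw [hF]; simp only; rw [det_zero_of_not_inj φ hni]; ring
  have hkey : ∀ W : Finset (Fin M), m ≤ W.card →
      ∑ x ∈ W, DI (W.erase x) = (W.card - m) • DI W := by
    intro W hmW
    have hstep1 : ∀ x : Fin M,
        (Fintype.piFinset fun _ : Fin m => W.erase x).filter Function.Injective
          = ((Fintype.piFinset fun _ : Fin m => W).filter Function.Injective).filter
              (fun φ => ∀ j, φ j ≠ x) := by
      intro x
      ext φ
      simp only [Finset.mem_filter, Fintype.mem_piFinset, Finset.mem_erase]
      constructor
      · rintro ⟨h1, h2⟩; exact ⟨⟨fun j => (h1 j).2, h2⟩, fun j => (h1 j).1⟩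
      · rintro ⟨⟨h1, h2⟩, h3⟩; exact ⟨fun j => ⟨h3 j, h1 j⟩, h2⟩
    calc ∑ x ∈ W, DI (W.erase x)
        = ∑ x ∈ W, ∑ φ ∈ (Fintype.piFinset fun _ : Fin m => W).filter Function.Injective,
            if (∀ j, φ j ≠ x) then F φ else 0 := by
          refine Finset.sum_congr rfl fun x _ => ?_
          rw [hDI]; simp only; rw [hstep1 x, Finset.sum_filter]
      _ = ∑ φ ∈ (Fintype.piFinset fun _ : Fin m => W).filter Function.Injective,
            ∑ x ∈ W, if (∀ j, φ j ≠ x) then F φ else 0 := Finset.sum_comm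
      _ = ∑ φ ∈ (Fintype.piFinset fun _ : Fin m => W).filter Function.Injective,
            (W.card - m) • F φ := by
          refine Finset.sum_congr rfl fun φ hφ => ?_
          simp only [Finset.mem_filter, Fintype.mem_piFinset] at hφ
          rw [← Finset.sum_filter, Finset.sum_const]
          congr 1
          have himg : Finset.image φ Finset.univ ⊆ W := by
            intro y hy
            simp only [Finset.mem_image] at hy
            obtain ⟨j, _, rfl⟩ := hy
            exact hφ.1 j
          have hfeq : W.filter (fun x => ∀ j, φ j ≠ x) = W \ Finset.image φ Finset.univ := by
            ext y
            simp only [Finset.mem_filter, Finset.mem_sdiff, Finset.mem_image]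
            constructor
            · rintro ⟨hyW, hy⟩
              exact ⟨hyW, by rintro ⟨j, _, rfl⟩; exact hy j rfl⟩
            · rintro ⟨hyW, hy⟩
              exact ⟨hyW, fun j hj => hy ⟨j, Finset.mem_univ j, hj⟩⟩
          rw [hfeq, Finset.card_sdiff_of_subset himg, Finset.card_image_of_injective _ hφ.2]
          simp
      _ = (W.card - m) • DI W := by rw [hDI]; simp only; rw [Finset.smul_sum]
  have main : ∀ k (W : Finset (Fin M)), W.card = s + k → DI W ≠ 0 →
      ∃ S : Finset (Fin M), S.card = s ∧ DI S ≠ 0 := by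
    intro k
    induction k with
    | zero => intro W hc hne; exact ⟨W, by omega, hne⟩
    | succ k ih =>
      intro W hc hne
      have hmW : m ≤ W.card := by omega
      have hsum : ∑ x ∈ W, DI (W.erase x) ≠ 0 := by
        rw [hkey W hmW]
        have h1 : (W.card - m : ℕ) ≠ 0 := by omega
        simp only [nsmul_eq_mul, ne_eq, mul_eq_zero, not_or]
        exact ⟨by exact_mod_cast h1, hne⟩
      obtain ⟨x, hx, hxne⟩ := Finset.exists_ne_zero_of_sum_ne_zero hsum
      exact ih (W.erase x) (by rw [Finset.card_erase_of_mem hx]; omega) hxne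
  have hcard : (Finset.univ : Finset (Fin M)).card = s + (M - s) := by
    simp [Fintype.card_fin]; omega
  have huniv : DI Finset.univ ≠ 0 := by
    rw [← hDeq]; exact h
  obtain ⟨S, hS1, hS2⟩ := main (M - s) Finset.univ hcard huniv
  exact ⟨S, hS1, by rw [hDeq]; exact hS2⟩

end CPAux2



namespace CPAuxM

variable {n d m : ℕ}

/-- The set of tensors whose distinguished block slice is singular is Lebesgue-null. -/
lemma volume_det_block_zero (i0 : Fin n) (eJ : Fin m → Fin d) (eK : Fin m → Fin n)
    (hJ : Function.Injective eJ) (hK : Function.Injective eK) :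
    volume {T : Fin n → Fin d → Fin n → ℝ |
      (Matrix.of fun j k => T i0 (eJ j) (eK k)).det = 0} = 0 := by
  classical
  haveI hinv : Measure.IsAddLeftInvariant (volume : Measure (Fin n → Fin d → Fin n → ℝ)) :=
    MeasureTheory.Pi.isAddLeftInvariant_volume
  set blk : (Fin n → Fin d → Fin n → ℝ) → Matrix (Fin m) (Fin m) ℝ := fun T => Matrix.of fun j k => T i0 (eJ j) (eK k)
    with hblk
  have hblkcont : Continuous blk := by
    refine continuous_pi fun j => continuous_pi fun k => ?_
    exact (continuous_apply (eK k)).comp ((continuous_apply (eJ j)).comp (continuous_apply i0))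
  set q : (Fin n → Fin d → Fin n → ℝ) → ℝ := fun T => (blk T).det with hq
  have hqcont : Continuous q := hblkcont.matrix_det
  set G : (Fin n → Fin d → Fin n → ℝ) := fun i j k => ∑ l : Fin m, if i = i0 ∧ j = eJ l ∧ k = eK l then (1:ℝ) else 0
    with hG
  have hblkG : blk G = 1 := by
    funext j k
    show (∑ l : Fin m, if i0 = i0 ∧ eJ j = eJ l ∧ eK k = eK l then (1:ℝ) else 0)
      = (1 : Matrix (Fin m) (Fin m) ℝ) j k
    by_cases hjk : j = k
    · subst hjk
      rw [Finset.sum_eq_single j]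
      · simp [Matrix.one_apply]
      · intro l _ hl
        have hcc : ¬ (i0 = i0 ∧ eJ j = eJ l ∧ eK j = eK l) := by
          rintro ⟨-, h2, -⟩
          exact hl (hJ h2).symm
        rw [if_neg hcc]
      · intro habs; exact absurd (Finset.mem_univ j) habs
    · rw [Finset.sum_eq_zero, Matrix.one_apply_ne hjk]
      intro l _
      have hcc : ¬ (i0 = i0 ∧ eJ j = eJ l ∧ eK k = eK l) := by
        rintro ⟨-, h2, h3⟩
        exact hjk ((hJ h2).trans (hK h3).symm)
      rw [if_neg hcc]
  have hblkadd : ∀ (T : (Fin n → Fin d → Fin n → ℝ)) (t : ℝ), blk (T + t • G) = blk T + t • (1 : Matrix (Fin m) (Fin m) ℝ) := by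
    intro T t
    funext j k
    have : (T + t • G) i0 (eJ j) (eK k) = T i0 (eJ j) (eK k) + t * G i0 (eJ j) (eK k) := rfl
    show blk (T + t • G) j k = (blk T + t • (1 : Matrix (Fin m) (Fin m) ℝ)) j k
    calc blk (T + t • G) j k = T i0 (eJ j) (eK k) + t * G i0 (eJ j) (eK k) := this
      _ = blk T j k + t * blk G j k := rfl
      _ = (blk T + t • (1 : Matrix (Fin m) (Fin m) ℝ)) j k := by
          rw [hblkG]
          simp [Matrix.add_apply, Matrix.smul_apply, smul_eq_mul]
  -- finitely many bad t for each T
  have hroots : ∀ T : (Fin n → Fin d → Fin n → ℝ), {t : ℝ | q (T + t • G) = 0}.Finite := by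
    intro T
    have hsub : {t : ℝ | q (T + t • G) = 0} ⊆ {t : ℝ | Polynomial.IsRoot ((-(blk T)).charpoly) t} := by
      intro t ht
      simp only [Set.mem_setOf_eq] at ht ⊢
      have : q (T + t • G) = Polynomial.eval t ((-(blk T)).charpoly) := by
        rw [hq]
        simp only
        rw [hblkadd]
        rw [Matrix.charpoly]
        rw [show Polynomial.eval t (Matrix.charmatrix (-(blk T))).det
            = Polynomial.evalRingHom t (Matrix.charmatrix (-(blk T))).det from rfl]
        rw [RingHom.map_det (Polynomial.evalRingHom t)]
        congr 1
        ext i j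
        simp only [RingHom.mapMatrix_apply, Matrix.map_apply, Matrix.charmatrix_apply,
          Matrix.diagonal_apply, Matrix.neg_apply, Polynomial.eval_sub, Matrix.add_apply,
          Matrix.smul_apply, Matrix.one_apply, smul_eq_mul]
        by_cases hij : i = j <;> simp [hij, Polynomial.eval_C, Polynomial.eval_X, add_comm]
      rw [Polynomial.IsRoot, ← this, ht]
    exact (Polynomial.finite_setOf_isRoot ((Matrix.charpoly_monic (-(blk T))).ne_zero)).subset hsub
  set BAD : Set (Fin n → Fin d → Fin n → ℝ) := {T | q T = 0} with hBAD
  have hBADmeas : MeasurableSet BAD :=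
    (isClosed_singleton.preimage hqcont).measurableSet
  set S' : Set (ℝ × (Fin n → Fin d → Fin n → ℝ)) := {p | p.1 ∈ Set.Icc (0:ℝ) 1 ∧ q (p.2 + p.1 • G) = 0} with hS'
  have hcont2 : Continuous fun p : ℝ × (Fin n → Fin d → Fin n → ℝ) => q (p.2 + p.1 • G) :=
    hqcont.comp (continuous_snd.add (continuous_fst.smul continuous_const))
  have hS'meas : MeasurableSet S' := by
    have h1 : S' = (Set.Icc (0:ℝ) 1 ×ˢ (Set.univ : Set (Fin n → Fin d → Fin n → ℝ))) ∩
        ((fun p : ℝ × (Fin n → Fin d → Fin n → ℝ) => q (p.2 + p.1 • G)) ⁻¹' {0}) := by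
      ext p
      simp only [hS', Set.mem_setOf_eq, Set.mem_inter_iff, Set.mem_prod, Set.mem_univ,
        and_true, Set.mem_preimage, Set.mem_singleton_iff]
    rw [h1]
    exact (measurableSet_Icc.prod MeasurableSet.univ).inter
      ((isClosed_singleton.preimage hcont2).measurableSet)
  set μ := (volume : Measure ℝ).prod (volume : Measure (Fin n → Fin d → Fin n → ℝ)) with hμ
  have h1 : μ S' = volume BAD := by
    rw [hμ, Measure.prod_apply hS'meas]
    have hslice : ∀ t : ℝ, volume (Prod.mk t ⁻¹' S')
        = Set.indicator (Set.Icc (0:ℝ) 1) (fun _ => volume BAD) t := by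
      intro t
      by_cases ht : t ∈ Set.Icc (0:ℝ) 1
      · rw [Set.indicator_of_mem ht]
        have hpre : Prod.mk t ⁻¹' S' = (fun T : (Fin n → Fin d → Fin n → ℝ) => T + t • G) ⁻¹' BAD := by
          ext T
          simp only [Set.mem_preimage, hS', hBAD, Set.mem_setOf_eq, ht, true_and]
        rw [hpre, show (fun T : (Fin n → Fin d → Fin n → ℝ) => T + t • G) ⁻¹' BAD
            = (fun T : (Fin n → Fin d → Fin n → ℝ) => t • G + T) ⁻¹' BAD from by
              funext T; simp [add_comm]]
        exact measure_preimage_add volume (t • G) BAD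
      · rw [Set.indicator_of_notMem ht]
        have hpre : Prod.mk t ⁻¹' S' = ∅ := by
          ext T
          simp only [Set.mem_preimage, hS', Set.mem_setOf_eq, ht, false_and,
            Set.mem_empty_iff_false]
        simp [hpre]
    calc ∫⁻ t, volume (Prod.mk t ⁻¹' S')
        = ∫⁻ t, Set.indicator (Set.Icc (0:ℝ) 1) (fun _ => volume BAD) t :=
          lintegral_congr hslice
      _ = volume BAD * volume (Set.Icc (0:ℝ) 1) := lintegral_indicator_const measurableSet_Icc _
      _ = volume BAD := by simp [Real.volume_Icc]
  have h2 : μ S' = 0 := by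
    rw [hμ, Measure.prod_apply_symm hS'meas]
    have hz : ∀ T : (Fin n → Fin d → Fin n → ℝ), volume ((fun t : ℝ => (t, T)) ⁻¹' S') = 0 := by
      intro T
      refine measure_mono_null ?_ ((hroots T).measure_zero volume)
      intro t ht
      simp only [Set.mem_preimage, hS', Set.mem_setOf_eq] at ht
      exact ht.2
    calc ∫⁻ T, volume ((fun t : ℝ => (t, T)) ⁻¹' S') ∂(volume : Measure (Fin n → Fin d → Fin n → ℝ))
        = ∫⁻ _T, 0 ∂(volume : Measure (Fin n → Fin d → Fin n → ℝ)) := lintegral_congr hz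
      _ = 0 := lintegral_zero
  have : volume BAD = 0 := by rw [← h1, h2]
  exact this

end CPAuxM

noncomputable section CPAlg

namespace CPAlg

lemma triple_swap {α : Type*} [AddCommMonoid α] {p q r : ℕ} (f : Fin p → Fin q → Fin r → α) :
    ∑ i, ∑ j, ∑ l, f i j l = ∑ l, ∑ i, ∑ j, f i j l :=
  calc ∑ i, ∑ j, ∑ l, f i j l
      = ∑ i, ∑ l, ∑ j, f i j l := Finset.sum_congr rfl fun i _ => Finset.sum_comm
    _ = ∑ l, ∑ i, ∑ j, f i j l := Finset.sum_comm

lemma sum_mul_single {p : ℕ} (f : Fin p → ℝ) (i0 : Fin p) :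
    ∑ i, f i * (Pi.single i0 1 : Fin p → ℝ) i = f i0 := by
  rw [Finset.sum_eq_single i0]
  · simp
  · intro i _ hi; simp [Pi.single_apply, hi]
  · intro h; exact absurd (Finset.mem_univ i0) h

lemma modeProd_cpT {n d R : ℕ} (A : Matrix (Fin n) (Fin R) ℝ) (B : Matrix (Fin d) (Fin R) ℝ)
    (C : Matrix (Fin n) (Fin R) ℝ) (h : Fin n → ℝ) (x : Fin d → ℝ) (k : Fin n) :
    modeProd (cpT A B C) h x k
      = ∑ r, (∑ i, A i r * h i) * ((∑ j, B j r * x j) * C k r) := by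
  unfold modeProd cpT
  calc ∑ i, ∑ j, (∑ r, A i r * B j r * C k r) * h i * x j
      = ∑ i, ∑ j, ∑ r, A i r * B j r * C k r * h i * x j := by
        refine Finset.sum_congr rfl fun i _ => Finset.sum_congr rfl fun j _ => ?_
        rw [Finset.sum_mul, Finset.sum_mul]
    _ = ∑ r, ∑ i, ∑ j, A i r * B j r * C k r * h i * x j := triple_swap _
    _ = ∑ r, (∑ i, A i r * h i) * ((∑ j, B j r * x j) * C k r) := by
        refine Finset.sum_congr rfl fun r _ => ?_
        rw [Finset.sum_mul]
        refine Finset.sum_congr rfl fun i _ => ?_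
        rw [Finset.sum_mul, Finset.mul_sum]
        refine Finset.sum_congr rfl fun j _ => ?_
        ring

lemma modeProd_single_single {n d : ℕ} (T : Fin n → Fin d → Fin n → ℝ) (i : Fin n)
    (j : Fin d) (k : Fin n) :
    modeProd T (Pi.single i 1) (Pi.single j 1) k = T i j k := by
  unfold modeProd
  rw [Finset.sum_eq_single i]
  · rw [Finset.sum_eq_single j]
    · simp
    · intro j' _ hj'; simp [Pi.single_apply, hj']
    · intro h; exact absurd (Finset.mem_univ j) h
  · intro i' _ hi'
    rw [Finset.sum_eq_zero]
    intro j' _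
    simp [Pi.single_apply, hi']
  · intro h; exact absurd (Finset.mem_univ i) h

lemma modeProd_sum_x {n d p : ℕ} (T : Fin n → Fin d → Fin n → ℝ) (h : Fin n → ℝ)
    (c : Fin p → ℝ) (e : Fin p → Fin d → ℝ) (k : Fin n) :
    modeProd T h (fun j => ∑ l, c l * e l j) k = ∑ l, c l * modeProd T h (e l) k := by
  unfold modeProd
  calc ∑ i, ∑ j, T i j k * h i * (∑ l, c l * e l j)
      = ∑ i, ∑ j, ∑ l, T i j k * h i * (c l * e l j) := by
        refine Finset.sum_congr rfl fun i _ => Finset.sum_congr rfl fun j _ => ?_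
        rw [Finset.mul_sum]
    _ = ∑ l, ∑ i, ∑ j, T i j k * h i * (c l * e l j) := triple_swap _
    _ = ∑ l, c l * ∑ i, ∑ j, T i j k * h i * e l j := by
        refine Finset.sum_congr rfl fun l _ => ?_
        rw [Finset.mul_sum]
        refine Finset.sum_congr rfl fun i _ => ?_
        rw [Finset.mul_sum]
        refine Finset.sum_congr rfl fun j _ => ?_
        ring

/-- Every tensor admits a CP decomposition with `d1 * d3` terms. -/
lemma exists_decomp {d1 d2 d3 : ℕ} (T : Fin d1 → Fin d2 → Fin d3 → ℝ) :
    ∃ (A : Matrix (Fin d1) (Fin (d1 * d3)) ℝ) (B : Matrix (Fin d2) (Fin (d1 * d3)) ℝ)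
      (C : Matrix (Fin d3) (Fin (d1 * d3)) ℝ), T = cpT A B C := by
  classical
  let e : Fin d1 × Fin d3 ≃ Fin (d1 * d3) := finProdFinEquiv
  refine ⟨fun i r => if i = (e.symm r).1 then 1 else 0,
          fun j r => T (e.symm r).1 j (e.symm r).2,
          fun k r => if k = (e.symm r).2 then 1 else 0, ?_⟩
  funext i j k
  unfold cpT
  rw [show (∑ r : Fin (d1 * d3), (if i = (e.symm r).1 then (1:ℝ) else 0) *
        T (e.symm r).1 j (e.symm r).2 * (if k = (e.symm r).2 then 1 else 0))
      = ∑ p : Fin d1 × Fin d3, (if i = p.1 then (1:ℝ) else 0) * T p.1 j p.2 *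
          (if k = p.2 then 1 else 0) from by
    rw [← Equiv.sum_comp e.symm (fun p : Fin d1 × Fin d3 =>
      (if i = p.1 then (1:ℝ) else 0) * T p.1 j p.2 * (if k = p.2 then 1 else 0))]]
  rw [Fintype.sum_prod_type]
  rw [Finset.sum_eq_single i]
  · rw [Finset.sum_eq_single k]
    · simp
    · intro b _ hb; simp [Ne.symm hb]
    · intro h; exact absurd (Finset.mem_univ k) h
  · intro a _ ha
    refine Finset.sum_eq_zero fun b _ => ?_
    simp [Ne.symm ha]
  · intro h; exact absurd (Finset.mem_univ i) h

lemma cprank_le_of_decomp {d1 d2 d3 R : ℕ} {T : Fin d1 → Fin d2 → Fin d3 → ℝ}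
    (A : Matrix (Fin d1) (Fin R) ℝ) (B : Matrix (Fin d2) (Fin R) ℝ)
    (C : Matrix (Fin d3) (Fin R) ℝ) (h : T = cpT A B C) : cprank T ≤ R :=
  Nat.sInf_le ⟨A, B, C, h⟩

lemma decomp_exact {d1 d2 d3 M : ℕ} (T : Fin d1 → Fin d2 → Fin d3 → ℝ)
    (h : cprank T = M) :
    ∃ (A : Matrix (Fin d1) (Fin M) ℝ) (B : Matrix (Fin d2) (Fin M) ℝ)
      (C : Matrix (Fin d3) (Fin M) ℝ), T = cpT A B C := by
  subst h
  have hne : {R : ℕ | ∃ (A : Matrix (Fin d1) (Fin R) ℝ) (B : Matrix (Fin d2) (Fin R) ℝ)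
      (C : Matrix (Fin d3) (Fin R) ℝ), T = cpT A B C}.Nonempty := by
    obtain ⟨A, B, C, hd⟩ := exists_decomp T
    exact ⟨d1 * d3, A, B, C, hd⟩
  exact Nat.sInf_mem hne

/-- Reindex a partial CP sum over a subset as a genuine CP decomposition. -/
lemma subcp_as_cpT {d1 d2 d3 M c : ℕ} (A : Matrix (Fin d1) (Fin M) ℝ)
    (B : Matrix (Fin d2) (Fin M) ℝ) (C : Matrix (Fin d3) (Fin M) ℝ)
    (S : Finset (Fin M)) (hc : S.card = c) :
    ∃ (A' : Matrix (Fin d1) (Fin c) ℝ) (B' : Matrix (Fin d2) (Fin c) ℝ)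
      (C' : Matrix (Fin d3) (Fin c) ℝ),
      (fun i j k => ∑ r ∈ S, A i r * B j r * C k r) = cpT A' B' C' := by
  classical
  let e : Fin c ≃ {x // x ∈ S} := (S.equivFin.trans (finCongr hc)).symm
  refine ⟨fun i r => A i (e r : Fin M), fun j r => B j (e r : Fin M),
          fun k r => C k (e r : Fin M), ?_⟩
  funext i j k
  unfold cpT
  rw [← Finset.sum_coe_sort S (fun r => A i r * B j r * C k r)]
  exact (Equiv.sum_comp e fun x : {x // x ∈ S} =>
    A i (x : Fin M) * B j (x : Fin M) * C k (x : Fin M)).symm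

/-- Sum of two CP tensors has a CP decomposition with the sum of the numbers of terms. -/
lemma cpT_add {d1 d2 d3 R1 R2 : ℕ} (A1 : Matrix (Fin d1) (Fin R1) ℝ)
    (B1 : Matrix (Fin d2) (Fin R1) ℝ) (C1 : Matrix (Fin d3) (Fin R1) ℝ)
    (A2 : Matrix (Fin d1) (Fin R2) ℝ) (B2 : Matrix (Fin d2) (Fin R2) ℝ)
    (C2 : Matrix (Fin d3) (Fin R2) ℝ) :
    ∃ (A : Matrix (Fin d1) (Fin (R1 + R2)) ℝ) (B : Matrix (Fin d2) (Fin (R1 + R2)) ℝ)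
      (C : Matrix (Fin d3) (Fin (R1 + R2)) ℝ),
      (fun i j k => cpT A1 B1 C1 i j k + cpT A2 B2 C2 i j k) = cpT A B C := by
  refine ⟨fun i => Fin.append (A1 i) (A2 i), fun j => Fin.append (B1 j) (B2 j),
          fun k => Fin.append (C1 k) (C2 k), ?_⟩
  funext i j k
  unfold cpT
  rw [Fin.sum_univ_add]
  simp [Fin.append_left, Fin.append_right]

end CPAlg

end CPAlg


end AuxLemmas


section MainAux

open CPAlg

/-- Construct the witness CP tensor: rank-`R+1` realizable, not rank-`R` realizable,
with a nonsingular distinguished block of its `i0`-slice. -/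
lemma witness_core (d n R M : ℕ) (m : ℕ) (i0 : Fin n)
    (eJ : Fin m → Fin d) (eK : Fin m → Fin n)
    (hJ : Function.Injective eJ) (hK : Function.Injective eK)
    (hmR : m ≤ R + 1) (hRM : R + 1 ≤ M)
    (hZpos : 0 < volume {T : Fin n → Fin d → Fin n → ℝ | cprank T = M}) :
    ∃ (AS : Matrix (Fin n) (Fin (R+1)) ℝ) (BS : Matrix (Fin d) (Fin (R+1)) ℝ)
      (CS : Matrix (Fin n) (Fin (R+1)) ℝ),
      (Matrix.of fun j k => cpT AS BS CS i0 (eJ j) (eK k)).det ≠ 0 ∧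
      ¬ ∃ (A' : Matrix (Fin n) (Fin R) ℝ) (B' : Matrix (Fin d) (Fin R) ℝ)
          (C' : Matrix (Fin n) (Fin R) ℝ), cpT AS BS CS = cpT A' B' C' := by
  classical
  have hbad := CPAuxM.volume_det_block_zero i0 eJ eK hJ hK
  have hns : ¬ ({T : Fin n → Fin d → Fin n → ℝ | cprank T = M}
      ⊆ {T : Fin n → Fin d → Fin n → ℝ |
          (Matrix.of fun j k => T i0 (eJ j) (eK k)).det = 0}) := by
    intro hsb
    exact absurd (measure_mono_null hsb hbad) hZpos.ne'
  obtain ⟨Tstar, hTZ, hTB⟩ := Set.not_subset.mp hns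
  simp only [Set.mem_setOf_eq] at hTZ hTB
  obtain ⟨A, B, C, hdec⟩ := CPAlg.decomp_exact Tstar hTZ
  have hseed : (Matrix.of fun j k => ∑ r : Fin M,
      (A i0 r * B (eJ j) r) * C (eK k) r).det ≠ 0 := by
    have hmat : (Matrix.of fun j k => ∑ r : Fin M, (A i0 r * B (eJ j) r) * C (eK k) r)
        = (Matrix.of fun j k => Tstar i0 (eJ j) (eK k)) := by
      funext j k
      rw [hdec]
      rfl
    rw [hmat]
    exact hTB
  obtain ⟨S, hScard, hSdet⟩ := CPAux2.exists_subset_det_ne_zero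
      (fun r j => A i0 r * B (eJ j) r) (fun r k => C (eK k) r) (R+1) hmR hRM hseed
  obtain ⟨AS, BS, CS, hts⟩ := CPAlg.subcp_as_cpT A B C S hScard
  refine ⟨AS, BS, CS, ?_, ?_⟩
  · have hmat : (Matrix.of fun j k => cpT AS BS CS i0 (eJ j) (eK k))
        = (Matrix.of fun j k => ∑ r ∈ S, (A i0 r * B (eJ j) r) * C (eK k) r) := by
      funext j k
      rw [← hts]
    rw [hmat]
    exact hSdet
  · rintro ⟨A', B', C', hts'⟩
    have hccard : Sᶜ.card = M - (R + 1) := by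
      rw [Finset.card_compl, hScard]
      simp [Fintype.card_fin]
    obtain ⟨A2, B2, C2, hts2⟩ := CPAlg.subcp_as_cpT A B C Sᶜ hccard
    obtain ⟨AA, BB, CC, hsum⟩ := CPAlg.cpT_add A' B' C' A2 B2 C2
    have hfull : Tstar = cpT AA BB CC := by
      funext i j k
      have h1 : cpT A' B' C' i j k = ∑ r ∈ S, A i r * B j r * C k r := by
        rw [← hts', ← hts]
      have h2 : cpT A2 B2 C2 i j k = ∑ r ∈ Sᶜ, A i r * B j r * C k r := by
        rw [← hts2]
      have h3 := congrFun (congrFun (congrFun hsum i) j) k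
      rw [← h3, h1, h2, hdec]
      exact (Finset.sum_add_sum_compl S _).symm
    have hle := CPAlg.cprank_le_of_decomp AA BB CC hfull
    omega

/-- Separation in the regime `R + 1 ≤ n`: one step suffices. -/
lemma sepA (d n R : ℕ) (σ : ℝ → ℝ) (hσinj : Function.Injective σ) (i0 : Fin n)
    (eJ : Fin (R+1) → Fin d) (eK : Fin (R+1) → Fin n)
    (AS : Matrix (Fin n) (Fin (R+1)) ℝ) (BS : Matrix (Fin d) (Fin (R+1)) ℝ)
    (CS : Matrix (Fin n) (Fin (R+1)) ℝ)
    (hdet : (Matrix.of fun j k => cpT AS BS CS i0 (eJ j) (eK k)).det ≠ 0)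
    (hmem : (fun (x : ℕ → Fin d → ℝ) (t : ℕ) =>
      cpbirnnStates σ (Pi.single i0 1 : Fin n → ℝ) AS BS CS x (t+1)) ∈ HCPBIRNN d n R σ) :
    False := by
  obtain ⟨h0', A', B', C', heq⟩ := hmem
  have hstate0 : ∀ (x0 : Fin d → ℝ) (k : Fin n),
      σ (modeProd (cpT AS BS CS) (Pi.single i0 1 : Fin n → ℝ) x0 k)
        = σ (modeProd (cpT A' B' C') h0' x0 k) :=
    fun x0 k => congrFun (heq (fun _ => x0) 0) k
  have hEq1 : ∀ (x0 : Fin d → ℝ) (k : Fin n),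
      modeProd (cpT AS BS CS) (Pi.single i0 1 : Fin n → ℝ) x0 k
        = modeProd (cpT A' B' C') h0' x0 k := fun x0 k => hσinj (hstate0 x0 k)
  have hGA : (Matrix.of fun j k => cpT AS BS CS i0 (eJ j) (eK k))
      = (Matrix.of fun j k => ∑ r : Fin R,
          ((∑ i, A' i r * h0' i) * B' (eJ j) r) * C' (eK k) r) := by
    funext j k
    have h2 : cpT AS BS CS i0 (eJ j) (eK k)
        = modeProd (cpT AS BS CS) (Pi.single i0 1 : Fin n → ℝ)
            (Pi.single (eJ j) 1 : Fin d → ℝ) (eK k) :=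
      (CPAlg.modeProd_single_single _ _ _ _).symm
    show cpT AS BS CS i0 (eJ j) (eK k) = _
    rw [h2, hEq1, CPAlg.modeProd_cpT]
    refine Finset.sum_congr rfl fun r _ => ?_
    rw [CPAlg.sum_mul_single (fun j' => B' j' r) (eJ j)]
    ring
  rw [hGA] at hdet
  exact hdet (CPAux.det_rankone_sum_zero (by omega)
    (fun r j => (∑ i, A' i r * h0' i) * B' (eJ j) r) (fun r k => C' (eK k) r))

/-- Separation in the regime `n ≤ R + 1`: two steps suffice. -/
lemma sepB (d n R : ℕ) (hnd : n ≤ d) (σ : ℝ → ℝ) (hσb : Function.Bijective σ) (i0 : Fin n)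
    (AS : Matrix (Fin n) (Fin (R+1)) ℝ) (BS : Matrix (Fin d) (Fin (R+1)) ℝ)
    (CS : Matrix (Fin n) (Fin (R+1)) ℝ)
    (hdet : (Matrix.of fun j' k => cpT AS BS CS i0 (Fin.castLE hnd j') k).det ≠ 0)
    (hnos : ¬ ∃ (A' : Matrix (Fin n) (Fin R) ℝ) (B' : Matrix (Fin d) (Fin R) ℝ)
        (C' : Matrix (Fin n) (Fin R) ℝ), cpT AS BS CS = cpT A' B' C')
    (hmem : (fun (x : ℕ → Fin d → ℝ) (t : ℕ) =>
      cpbirnnStates σ (Pi.single i0 1 : Fin n → ℝ) AS BS CS x (t+1)) ∈ HCPBIRNN d n R σ) :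
    False := by
  classical
  obtain ⟨h0', A', B', C', heq⟩ := hmem
  set TS := cpT AS BS CS with hTS
  set T' := cpT A' B' C' with hT'
  set h0 : Fin n → ℝ := (Pi.single i0 1 : Fin n → ℝ) with hh0
  have hstate0 : ∀ (x0 : Fin d → ℝ) (k : Fin n),
      σ (modeProd TS h0 x0 k) = σ (modeProd T' h0' x0 k) :=
    fun x0 k => congrFun (heq (fun _ => x0) 0) k
  have hEq1 : ∀ (x0 : Fin d → ℝ) (k : Fin n),
      modeProd TS h0 x0 k = modeProd T' h0' x0 k :=
    fun x0 k => hσb.injective (hstate0 x0 k)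
  set G : Matrix (Fin n) (Fin n) ℝ := Matrix.of fun j' k => TS i0 (Fin.castLE hnd j') k with hG
  have hsurj : ∀ v : Fin n → ℝ, ∃ x0 : Fin d → ℝ, ∀ k, modeProd TS h0 x0 k = v k := by
    intro v
    have hunit : IsUnit (G.transpose).det := by
      rw [Matrix.det_transpose]
      exact isUnit_iff_ne_zero.mpr hdet
    set y := (G.transpose)⁻¹.mulVec v with hy
    refine ⟨fun j => ∑ j', y j' * (Pi.single (Fin.castLE hnd j') 1 : Fin d → ℝ) j, fun k => ?_⟩
    rw [CPAlg.modeProd_sum_x]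
    have hrow : ∀ j' : Fin n,
        modeProd TS h0 (Pi.single (Fin.castLE hnd j') 1 : Fin d → ℝ) k = G j' k := by
      intro j'
      rw [hh0, CPAlg.modeProd_single_single]
      rfl
    calc ∑ j', y j' * modeProd TS h0 (Pi.single (Fin.castLE hnd j') 1 : Fin d → ℝ) k
        = ∑ j', y j' * G j' k := Finset.sum_congr rfl fun j' _ => by rw [hrow j']
      _ = (G.transpose.mulVec y) k := by
          rw [Matrix.mulVec]
          simp only [dotProduct, Matrix.transpose_apply]
          exact Finset.sum_congr rfl fun j' _ => mul_comm _ _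
      _ = v k := by
          rw [hy, Matrix.mulVec_mulVec, Matrix.mul_nonsing_inv _ hunit, Matrix.one_mulVec]
  have hreach : ∀ g : Fin n → ℝ, ∃ x0 : Fin d → ℝ,
      (fun k => σ (modeProd TS h0 x0 k)) = g := by
    intro g
    obtain ⟨x0, hx0⟩ := hsurj (fun k => Function.surjInv hσb.surjective (g k))
    refine ⟨x0, funext fun k => ?_⟩
    rw [hx0 k]
    exact Function.surjInv_eq hσb.surjective (g k)
  have hstate1 : ∀ (x0 x1 : Fin d → ℝ) (k : Fin n),
      σ (modeProd TS (fun k' => σ (modeProd TS h0 x0 k')) x1 k)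
        = σ (modeProd T' (fun k' => σ (modeProd TS h0 x0 k')) x1 k) := by
    intro x0 x1 k
    have hinner : (fun k' => σ (modeProd T' h0' x0 k'))
        = (fun k' => σ (modeProd TS h0 x0 k')) :=
      funext fun k' => (hstate0 x0 k').symm
    have h2 : σ (modeProd TS (fun k' => σ (modeProd TS h0 x0 k')) x1 k)
        = σ (modeProd T' (fun k' => σ (modeProd T' h0' x0 k')) x1 k) :=
      congrFun (heq (fun t => if t = 0 then x0 else x1) 1) k
    rwa [hinner] at h2
  have hfinal : ∀ (g : Fin n → ℝ) (x1 : Fin d → ℝ) (k : Fin n),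
      modeProd TS g x1 k = modeProd T' g x1 k := by
    intro g x1 k
    obtain ⟨x0, hx0⟩ := hreach g
    have h3 := hstate1 x0 x1 k
    rw [hx0] at h3
    exact hσb.injective h3
  have hTT' : TS = T' := by
    funext i j k
    have h4 := hfinal (Pi.single i 1 : Fin n → ℝ) (Pi.single j 1 : Fin d → ℝ) k
    rwa [CPAlg.modeProd_single_single, CPAlg.modeProd_single_single] at h4
  exact hnos ⟨A', B', C', hTT'⟩

/-- Monotonicity of the CPBIRNN classes in the rank. -/
lemma cpbirnn_mono (d n R : ℕ) (σ : ℝ → ℝ) :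
    HCPBIRNN d n R σ ⊆ HCPBIRNN d n (R + 1) σ := by
  rintro h ⟨h0, A, B, C, hx⟩
  refine ⟨h0, fun i => Fin.snoc (A i) 0, fun j => Fin.snoc (B j) 0,
    fun k => Fin.snoc (C k) 0, ?_⟩
  have hcp : cpT (fun i => Fin.snoc (A i) (0:ℝ)) (fun j => Fin.snoc (B j) (0:ℝ))
      (fun k => Fin.snoc (C k) (0:ℝ)) = cpT A B C := by
    funext i j k
    unfold cpT
    rw [Fin.sum_univ_castSucc]
    simp
  have hstates : ∀ (x : ℕ → Fin d → ℝ) (t : ℕ),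
      cpbirnnStates σ h0 (fun i => Fin.snoc (A i) (0:ℝ)) (fun j => Fin.snoc (B j) (0:ℝ))
        (fun k => Fin.snoc (C k) (0:ℝ)) x t = cpbirnnStates σ h0 A B C x t := by
    intro x t
    induction t with
    | zero => rfl
    | succ t ih =>
      show (fun k => σ (modeProd (cpT (fun i => Fin.snoc (A i) (0:ℝ))
          (fun j => Fin.snoc (B j) (0:ℝ)) (fun k' => Fin.snoc (C k') (0:ℝ)))
          (cpbirnnStates σ h0 (fun i => Fin.snoc (A i) (0:ℝ)) (fun j => Fin.snoc (B j) (0:ℝ))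
            (fun k' => Fin.snoc (C k') (0:ℝ)) x t) (x t) k))
        = (fun k => σ (modeProd (cpT A B C) (cpbirnnStates σ h0 A B C x t) (x t) k))
      rw [hcp, ih]
  intro x t
  rw [hx x t, ← hstates]

end MainAux


/-- If `n ≤ d`, `σ` is real analytic and bijective, then for every
`R < R_typ-max(n,d,n)`, `H_CPBIRNN(R,n) ⊊ H_CPBIRNN(R+1,n)`. -/
theorem cpbirnn_rank_strict_mono (d n R : ℕ) (hnd : n ≤ d) (σ : ℝ → ℝ)
    (hσa : AnalyticOn ℝ σ Set.univ) (hσb : Function.Bijective σ)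
    (hR : R < RtypMax n d n) :
    HCPBIRNN d n R σ ⊂ HCPBIRNN d n (R + 1) σ := by
  classical
  rw [Set.ssubset_def]
  refine ⟨cpbirnn_mono d n R σ, fun hsup => ?_⟩
  have hTne : {R' : ℕ | IsTypicalRank n d n R'}.Nonempty := by
    by_contra hc
    rw [Set.not_nonempty_iff_eq_empty] at hc
    have h0 : RtypMax n d n = 0 := by
      rw [RtypMax, hc]
      exact csSup_empty
    omega
  have hbdd : BddAbove {R' : ℕ | IsTypicalRank n d n R'} := by
    refine ⟨n * n, fun R' hR' => ?_⟩
    obtain ⟨T0, hT0⟩ := nonempty_of_measure_ne_zero hR'.ne'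
    obtain ⟨A, B, C, hd0⟩ := CPAlg.exists_decomp T0
    have hle := CPAlg.cprank_le_of_decomp A B C hd0
    simp only [Set.mem_setOf_eq] at hT0
    omega
  have hMtyp : IsTypicalRank n d n (RtypMax n d n) := Nat.sSup_mem hTne hbdd
  set M := RtypMax n d n with hM
  have hRM : R + 1 ≤ M := hR
  have hZpos : 0 < volume {T : Fin n → Fin d → Fin n → ℝ | cprank T = M} := hMtyp
  obtain ⟨T0, hT0⟩ := nonempty_of_measure_ne_zero hZpos.ne'
  simp only [Set.mem_setOf_eq] at hT0
  have hn : 0 < n := by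
    rcases Nat.eq_zero_or_pos n with hn0 | hn0
    · exfalso
      subst hn0
      have hdec : T0 = cpT (R := 0) (fun i r => 0) (fun j r => 0) (fun k r => 0) := by
        funext i
        exact i.elim0
      have := CPAlg.cprank_le_of_decomp _ _ _ hdec
      omega
    · exact hn0
  set i0 : Fin n := ⟨0, hn⟩ with hi0
  rcases le_total (R + 1) n with hcase | hcase
  · -- R + 1 ≤ n
    have hJle : R + 1 ≤ d := le_trans hcase hnd
    obtain ⟨AS, BS, CS, hdet, hnos⟩ := witness_core d n R M (R+1) i0
      (Fin.castLE hJle) (Fin.castLE hcase)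
      (Fin.castLE_injective hJle) (Fin.castLE_injective hcase) le_rfl hRM hZpos
    have hmemR1 : (fun (x : ℕ → Fin d → ℝ) (t : ℕ) =>
        cpbirnnStates σ (Pi.single i0 1 : Fin n → ℝ) AS BS CS x (t+1))
        ∈ HCPBIRNN d n (R+1) σ :=
      ⟨(Pi.single i0 1 : Fin n → ℝ), AS, BS, CS, fun x t => rfl⟩
    exact sepA d n R σ hσb.injective i0 (Fin.castLE hJle) (Fin.castLE hcase)
      AS BS CS hdet (hsup hmemR1)
  · -- n ≤ R + 1
    obtain ⟨AS, BS, CS, hdet, hnos⟩ := witness_core d n R M n i0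
      (Fin.castLE hnd) (fun k => k)
      (Fin.castLE_injective hnd) (fun a b hab => hab) hcase hRM hZpos
    have hmemR1 : (fun (x : ℕ → Fin d → ℝ) (t : ℕ) =>
        cpbirnnStates σ (Pi.single i0 1 : Fin n → ℝ) AS BS CS x (t+1))
        ∈ HCPBIRNN d n (R+1) σ :=
      ⟨(Pi.single i0 1 : Fin n → ℝ), AS, BS, CS, fun x t => rfl⟩
    exact sepB d n R hnd σ hσb i0 AS BS CS hdet hnos (hsup hmemR1)
end

section
/- Assume n ≤ d and take the linear activation σ = identity. Then for every R < R_typ-max(n,d,n), the inclusion H_CPRNN(R,n) ⊊ H_CPRNN(R+1,n) is strict (both sides taken with the same d and with linear activation). -/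
open Matrix MeasureTheory

noncomputable section
namespace CPAux
variable {d1 d2 d3 : ℕ}

lemma exists_decomp (T : Fin d1 → Fin d2 → Fin d3 → ℝ) :
    ∃ (A : Matrix (Fin d1) (Fin (d1*d2)) ℝ) (B : Matrix (Fin d2) (Fin (d1*d2)) ℝ)
      (C : Matrix (Fin d3) (Fin (d1*d2)) ℝ), T = cpT A B C := by
  refine ⟨fun i r => if (finProdFinEquiv.symm r).1 = i then 1 else 0,
    fun j r => if (finProdFinEquiv.symm r).2 = j then 1 else 0,
    fun k r => T (finProdFinEquiv.symm r).1 (finProdFinEquiv.symm r).2 k, ?_⟩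
  funext i j k
  show T i j k = ∑ r : Fin (d1*d2),
      (if (finProdFinEquiv.symm r).1 = i then (1:ℝ) else 0) *
        (if (finProdFinEquiv.symm r).2 = j then (1:ℝ) else 0) *
        T (finProdFinEquiv.symm r).1 (finProdFinEquiv.symm r).2 k
  rw [Fintype.sum_equiv (finProdFinEquiv (m := d1) (n := d2)).symm _
    (fun p : Fin d1 × Fin d2 =>
      (if p.1 = i then (1:ℝ) else 0) * (if p.2 = j then (1:ℝ) else 0) * T p.1 p.2 k)
    (fun r => rfl)]
  rw [Fintype.sum_prod_type]
  simp [ite_mul, Finset.sum_ite_eq']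

lemma cprank_le {R : ℕ} {T : Fin d1 → Fin d2 → Fin d3 → ℝ}
    {A : Matrix (Fin d1) (Fin R) ℝ} {B : Matrix (Fin d2) (Fin R) ℝ}
    {C : Matrix (Fin d3) (Fin R) ℝ} (h : T = cpT A B C) : cprank T ≤ R :=
  Nat.sInf_le ⟨A, B, C, h⟩

lemma exists_min_decomp (T : Fin d1 → Fin d2 → Fin d3 → ℝ) :
    ∃ (A : Matrix (Fin d1) (Fin (cprank T)) ℝ) (B : Matrix (Fin d2) (Fin (cprank T)) ℝ)
      (C : Matrix (Fin d3) (Fin (cprank T)) ℝ), T = cpT A B C := by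
  have h : {R : ℕ | ∃ (A : Matrix (Fin d1) (Fin R) ℝ) (B : Matrix (Fin d2) (Fin R) ℝ)
      (C : Matrix (Fin d3) (Fin R) ℝ), T = cpT A B C}.Nonempty := ⟨d1*d2, exists_decomp T⟩
  exact Nat.sInf_mem h

lemma cprank_le_mul (T : Fin d1 → Fin d2 → Fin d3 → ℝ) : cprank T ≤ d1 * d2 := by
  obtain ⟨A, B, C, h⟩ := exists_decomp T; exact cprank_le h

lemma rank_step {m : ℕ} (h : ∃ T : Fin d1 → Fin d2 → Fin d3 → ℝ, cprank T = m + 1) :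
    ∃ S : Fin d1 → Fin d2 → Fin d3 → ℝ, cprank S = m := by
  obtain ⟨T, hT⟩ := h
  have hd := exists_min_decomp T
  rw [hT] at hd
  obtain ⟨A, B, C, hd⟩ := hd
  set S : Fin d1 → Fin d2 → Fin d3 → ℝ :=
    cpT (fun i r => A i r.castSucc) (fun j r => B j r.castSucc) (fun k r => C k r.castSucc)
    with hS
  have hTS : ∀ i j k, T i j k
      = S i j k + A i (Fin.last m) * B j (Fin.last m) * C k (Fin.last m) := by
    intro i j k
    rw [hd]
    show _ = (∑ r : Fin m, A i r.castSucc * B j r.castSucc * C k r.castSucc) + _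
    rw [cpT, Fin.sum_univ_castSucc]
  have hSm : cprank S ≤ m := cprank_le hS
  refine ⟨S, le_antisymm hSm ?_⟩
  obtain ⟨A', B', C', hd'⟩ := exists_min_decomp S
  have hTle : cprank T ≤ cprank S + 1 := by
    refine cprank_le (T := T)
      (A := fun i => Fin.snoc (A' i) (A i (Fin.last m)))
      (B := fun j => Fin.snoc (B' j) (B j (Fin.last m)))
      (C := fun k => Fin.snoc (C' k) (C k (Fin.last m))) ?_
    funext i j k
    have hs := congrFun (congrFun (congrFun hd' i) j) k
    rw [hTS i j k, hs]
    show (∑ r, A' i r * B' j r * C' k r) + _ = _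
    unfold cpT
    rw [Fin.sum_univ_castSucc]
    simp
  omega

lemma rank_down (k : ℕ) : ∀ j : ℕ, (∃ T : Fin d1 → Fin d2 → Fin d3 → ℝ, cprank T = k + j) →
    ∃ T : Fin d1 → Fin d2 → Fin d3 → ℝ, cprank T = k := by
  intro j
  induction j with
  | zero => exact fun h => h
  | succ j ih => exact fun h => ih (rank_step h)

lemma cpT_snoc_zero {R : ℕ} (A : Matrix (Fin d1) (Fin R) ℝ) (B : Matrix (Fin d2) (Fin R) ℝ)
    (C : Matrix (Fin d3) (Fin R) ℝ) :
    cpT (fun i => Fin.snoc (A i) 0) (fun j => Fin.snoc (B j) 0) (fun k => Fin.snoc (C k) 0)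
      = cpT A B C := by
  funext i j k
  show (∑ r : Fin (R+1), _) = (∑ r : Fin R, _)
  rw [Fin.sum_univ_castSucc]
  simp

lemma states_succ {n d R : ℕ} (σ : ℝ → ℝ) (h0 : Fin n → ℝ)
    (A : Matrix (Fin n) (Fin R) ℝ) (B : Matrix (Fin d) (Fin R) ℝ) (C : Matrix (Fin n) (Fin R) ℝ)
    (U : Matrix (Fin n) (Fin d) ℝ) (V : Matrix (Fin n) (Fin n) ℝ) (b : Fin n → ℝ)
    (x : ℕ → Fin d → ℝ) (t : ℕ) :
    cprnnStates σ h0 A B C U V b x (t+1) = fun k =>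
      σ (modeProd (cpT A B C) (cprnnStates σ h0 A B C U V b x t) (x t) k
        + V.mulVec (cprnnStates σ h0 A B C U V b x t) k + U.mulVec (x t) k + b k) := rfl

lemma states_congr {n d R1 R2 : ℕ} (σ : ℝ → ℝ) (h0 : Fin n → ℝ)
    (A1 : Matrix (Fin n) (Fin R1) ℝ) (B1 : Matrix (Fin d) (Fin R1) ℝ)
    (C1 : Matrix (Fin n) (Fin R1) ℝ)
    (A2 : Matrix (Fin n) (Fin R2) ℝ) (B2 : Matrix (Fin d) (Fin R2) ℝ)
    (C2 : Matrix (Fin n) (Fin R2) ℝ)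
    (U : Matrix (Fin n) (Fin d) ℝ) (V : Matrix (Fin n) (Fin n) ℝ) (b : Fin n → ℝ)
    (hc : cpT A1 B1 C1 = cpT A2 B2 C2) (x : ℕ → Fin d → ℝ) :
    ∀ t, cprnnStates σ h0 A1 B1 C1 U V b x t = cprnnStates σ h0 A2 B2 C2 U V b x t := by
  intro t
  induction t with
  | zero => rfl
  | succ t ih => funext k; simp only [cprnnStates, ih, hc]

lemma modeProd_zero_left (T : Fin d1 → Fin d2 → Fin d3 → ℝ) (v : Fin d2 → ℝ) :
    modeProd T 0 v = 0 := by
  funext k; simp [modeProd]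

lemma modeProd_zero_right (T : Fin d1 → Fin d2 → Fin d3 → ℝ) (u : Fin d1 → ℝ) :
    modeProd T u 0 = 0 := by
  funext k; simp [modeProd]

lemma modeProd_single (T : Fin d1 → Fin d2 → Fin d3 → ℝ) (i : Fin d1) (j : Fin d2) (k : Fin d3) :
    modeProd T (Pi.single i 1) (Pi.single j 1) k = T i j k := by
  simp [modeProd, Pi.single_apply, mul_ite, Finset.sum_ite_eq']

lemma tensor_ext {T T' : Fin d1 → Fin d2 → Fin d3 → ℝ}
    (h : ∀ u v, modeProd T u v = modeProd T' u v) : T = T' := by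
  funext i j k
  rw [← modeProd_single T i j k, ← modeProd_single T' i j k, h]

def Umat (n d : ℕ) : Matrix (Fin n) (Fin d) ℝ :=
  fun k j => if (j : ℕ) = (k : ℕ) then 1 else 0

lemma Umat_mulVec {n d : ℕ} (hnd : n ≤ d) (x : Fin d → ℝ) (k : Fin n) :
    (Umat n d).mulVec x k = x (Fin.castLE hnd k) := by
  unfold Umat Matrix.mulVec dotProduct
  rw [Finset.sum_eq_single (Fin.castLE hnd k)]
  · simp
  · intro j _ hj
    show (if (j : ℕ) = (k : ℕ) then (1:ℝ) else 0) * x j = 0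
    rw [if_neg, zero_mul]
    intro hc
    exact hj (Fin.ext hc)
  · simp

lemma Umat_surj {n d : ℕ} (hnd : n ≤ d) : Function.Surjective ((Umat n d).mulVec) := by
  intro u
  refine ⟨fun j => if h : (j : ℕ) < n then u ⟨j, h⟩ else 0, funext fun k => ?_⟩
  rw [Umat_mulVec hnd]
  simp [k.isLt]

end CPAux
end

/-- If `n ≤ d` and the activation is linear (identity), then for every
`R < R_typ-max(n,d,n)`, `H_CPRNN(R,n) ⊊ H_CPRNN(R+1,n)`. -/
theorem cprnn_rank_strict_mono_linear (d n R : ℕ) (hnd : n ≤ d)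
    (hR : R < RtypMax n d n) :
    HCPRNN d n R id ⊂ HCPRNN d n (R + 1) id := by
  rw [Set.ssubset_def]
  constructor
  · rintro h ⟨h0, A, B, C, U, V, b, hh⟩
    refine ⟨h0, fun i => Fin.snoc (A i) 0, fun j => Fin.snoc (B j) 0,
      fun k => Fin.snoc (C k) 0, U, V, b, fun x t => ?_⟩
    rw [hh x t,
      CPAux.states_congr id h0 A B C _ _ _ U V b (CPAux.cpT_snoc_zero A B C).symm x (t+1)]
  · intro hsub
    -- Extract a tensor of CP rank exactly R+1
    have hS : {r : ℕ | IsTypicalRank n d n r}.Nonempty := by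
      by_contra hne
      rw [Set.not_nonempty_iff_eq_empty] at hne
      have : RtypMax n d n = 0 := by rw [RtypMax, hne, csSup_empty]; rfl
      omega
    have hbdd : BddAbove {r : ℕ | IsTypicalRank n d n r} := by
      refine ⟨n * d, fun r hr => ?_⟩
      have hne : {T : Fin n → Fin d → Fin n → ℝ | cprank T = r}.Nonempty := by
        by_contra h2
        rw [Set.not_nonempty_iff_eq_empty] at h2
        unfold IsTypicalRank at hr
        simp only [Set.mem_setOf_eq] at hr
        rw [h2] at hr
        simp at hr
      obtain ⟨T, hT⟩ := hne
      rw [← hT]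
      exact CPAux.cprank_le_mul T
    have hmem : IsTypicalRank n d n (RtypMax n d n) := Nat.sSup_mem hS hbdd
    have hne2 : {T : Fin n → Fin d → Fin n → ℝ | cprank T = RtypMax n d n}.Nonempty := by
      by_contra h2
      rw [Set.not_nonempty_iff_eq_empty] at h2
      unfold IsTypicalRank at hmem
      rw [h2] at hmem
      simp at hmem
    obtain ⟨T0, hT0⟩ := hne2
    obtain ⟨T, hT⟩ := CPAux.rank_down (R+1) (RtypMax n d n - (R+1))
      ⟨T0, by rw [hT0]; omega⟩
    have hd := CPAux.exists_min_decomp T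
    rw [hT] at hd
    obtain ⟨A, B, C, hdec⟩ := hd
    set U : Matrix (Fin n) (Fin d) ℝ := CPAux.Umat n d with hU
    -- the candidate function
    set f : (ℕ → Fin d → ℝ) → ℕ → Fin n → ℝ :=
      fun x t => cprnnStates id (0 : Fin n → ℝ) A B C U 0 0 x (t+1) with hf
    have hfmem : f ∈ HCPRNN d n (R+1) id := ⟨0, A, B, C, U, 0, 0, fun x t => rfl⟩
    obtain ⟨h0', A', B', C', U', V', b', heq⟩ := hsub hfmem
    -- hidden states of the rank-(R+1) network
    have state1 : ∀ x : ℕ → Fin d → ℝ,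
        cprnnStates id (0 : Fin n → ℝ) A B C U 0 0 x 1 = U.mulVec (x 0) := by
      intro x
      rw [CPAux.states_succ]
      funext k
      simp [CPAux.modeProd_zero_left, Matrix.zero_mulVec,
        show cprnnStates id (0 : Fin n → ℝ) A B C U 0 0 x 0 = 0 from rfl]
    have state2 : ∀ (x : ℕ → Fin d → ℝ) k,
        cprnnStates id (0 : Fin n → ℝ) A B C U 0 0 x 2 k
          = modeProd (cpT A B C) (U.mulVec (x 0)) (x 1) k + U.mulVec (x 1) k := by
      intro x k
      rw [show (2:ℕ) = 1 + 1 from rfl, CPAux.states_succ]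
      simp [state1 x, Matrix.zero_mulVec]
    -- key functional equation
    have key : ∀ v w : Fin d → ℝ, ∀ k,
        modeProd (cpT A B C) (U.mulVec v) w k + U.mulVec w k
          = modeProd (cpT A' B' C') (U.mulVec v) w k + V'.mulVec (U.mulVec v) k
            + U'.mulVec w k + b' k := by
      intro v w k
      set x : ℕ → Fin d → ℝ := fun t => if t = 0 then v else w with hx
      have hx0 : x 0 = v := rfl
      have hx1 : x 1 = w := rfl
      have e0 : cprnnStates id (0 : Fin n → ℝ) A B C U 0 0 x 1
          = cprnnStates id h0' A' B' C' U' V' b' x 1 := heq x 0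
      have e1 : cprnnStates id (0 : Fin n → ℝ) A B C U 0 0 x 2
          = cprnnStates id h0' A' B' C' U' V' b' x 2 := heq x 1
      have s1 : cprnnStates id h0' A' B' C' U' V' b' x 1 = U.mulVec v := by
        rw [← e0, state1 x, hx0]
      have s2 : cprnnStates id h0' A' B' C' U' V' b' x 2 k
          = modeProd (cpT A' B' C') (U.mulVec v) (x 1) k + V'.mulVec (U.mulVec v) k
            + U'.mulVec (x 1) k + b' k := by
        rw [show (2:ℕ) = 1 + 1 from rfl, CPAux.states_succ]
        simp [s1]
      have := congrFun e1 k
      rw [state2 x k, s2, hx0, hx1] at this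
      exact this
    -- derive the pieces
    have hb : ∀ k, b' k = 0 := by
      intro k
      have h := key 0 0 k
      simpa [Matrix.mulVec_zero, CPAux.modeProd_zero_left, CPAux.modeProd_zero_right] using h.symm
    have hUU : ∀ (w : Fin d → ℝ) k, U.mulVec w k = U'.mulVec w k := by
      intro w k
      have h := key 0 w k
      simpa [Matrix.mulVec_zero, CPAux.modeProd_zero_left, hb k] using h
    have hV : ∀ (v : Fin d → ℝ) k, V'.mulVec (U.mulVec v) k = 0 := by
      intro v k
      have h := key v 0 k
      simp [Matrix.mulVec_zero, CPAux.modeProd_zero_right, hb k] at h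
      rw [Matrix.mulVec_mulVec]
      exact h.symm
    have core : ∀ (v w : Fin d → ℝ) k,
        modeProd (cpT A B C) (U.mulVec v) w k = modeProd (cpT A' B' C') (U.mulVec v) w k := by
      intro v w k
      have h := key v w k
      have h1 := hb k
      have h2 := hUU w k
      have h3 := hV v k
      linarith
    have hTT : cpT A B C = cpT A' B' C' := by
      apply CPAux.tensor_ext
      intro u w
      obtain ⟨v, hv⟩ := CPAux.Umat_surj hnd u
      have hv' : U.mulVec v = u := hv
      funext k
      have := core v w k
      rwa [hv'] at this
    have : cprank T ≤ R := CPAux.cprank_le (hdec.trans hTT)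
    omega
end

section
/- Assume n ≤ d. For every R > n and every activation function σ : ℝ → ℝ, one has H_MIRNN(n) ⊆ H_CPRNN(R,n) (both sides taken with the same d and the same σ). -/
open Matrix MeasureTheory

/-- If `n ≤ d`, then for every `R > n` and every activation `σ`,
`H_MIRNN(n) ⊆ H_CPRNN(R,n)`. -/
theorem mirnn_subset_cprnn (d n R : ℕ) (hnd : n ≤ d) (hR : n < R) (σ : ℝ → ℝ) :
    HMIRNN d n σ ⊆ HCPRNN d n R σ := by
  rintro h ⟨h0, α, β1, β2, b, U, V, hmi⟩
  classical
  set A : Matrix (Fin n) (Fin R) ℝ :=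
    fun i r => if hr : (r : ℕ) < n then V ⟨r, hr⟩ i else 0 with hA
  set B : Matrix (Fin d) (Fin R) ℝ :=
    fun j r => if hr : (r : ℕ) < n then U ⟨r, hr⟩ j else 0 with hB
  set C : Matrix (Fin n) (Fin R) ℝ :=
    fun k r => if (r : ℕ) = (k : ℕ) then α k else 0 with hC
  set U' : Matrix (Fin n) (Fin d) ℝ := fun k j => β2 k * U k j with hU'
  set V' : Matrix (Fin n) (Fin n) ℝ := fun k i => β1 k * V k i with hV'
  have hcp : ∀ (i j k), cpT A B C i j k = α k * V k i * U k j := by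
    intro i j k
    have hkR : (k : ℕ) < R := lt_trans k.isLt hR
    rw [cpT, Finset.sum_eq_single (⟨(k : ℕ), hkR⟩ : Fin R)]
    · simp [hA, hB, hC, k.isLt, mul_comm, mul_assoc, mul_left_comm]
    · intro r _ hr
      have : (r : ℕ) ≠ (k : ℕ) := by
        intro hc; exact hr (Fin.ext hc)
      simp [hC, this]
    · intro hc; exact absurd (Finset.mem_univ _) hc
  have hmode : ∀ (u : Fin n → ℝ) (v : Fin d → ℝ) (k : Fin n),
      modeProd (cpT A B C) u v k = α k * V.mulVec u k * U.mulVec v k := by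
    intro u v k
    rw [modeProd, Matrix.mulVec, Matrix.mulVec, dotProduct, dotProduct, mul_assoc,
      Finset.sum_mul_sum, Finset.mul_sum]
    refine Finset.sum_congr rfl fun i _ => ?_
    rw [Finset.mul_sum]
    refine Finset.sum_congr rfl fun j _ => ?_
    rw [hcp]; ring
  have hVm : ∀ (u : Fin n → ℝ) (k : Fin n), V'.mulVec u k = β1 k * V.mulVec u k := by
    intro u k
    simp [hV', Matrix.mulVec, dotProduct, Finset.mul_sum, mul_assoc]
  have hUm : ∀ (v : Fin d → ℝ) (k : Fin n), U'.mulVec v k = β2 k * U.mulVec v k := by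
    intro v k
    simp [hU', Matrix.mulVec, dotProduct, Finset.mul_sum, mul_assoc]
  refine ⟨h0, A, B, C, U', V', b, fun x t => ?_⟩
  have key : ∀ t, cprnnStates σ h0 A B C U' V' b x t = mirnnStates σ h0 α β1 β2 b U V x t := by
    intro t
    induction t with
    | zero => rfl
    | succ t ih =>
      funext k
      rw [cprnnStates, mirnnStates, ih]
      simp only [hmode, hVm, hUm]
  rw [hmi, key]
end

section
/- Assume n ≤ d and take the linear activation σ = identity. Then for every R with n < R < R_typ-max(n,d,n) + 1 (i.e. n < R ≤ R_typ-max(n,d,n)), the inclusion H_MIRNN(n) ⊊ H_CPRNN(R,n) is strict (both sides taken with the same d and with linear activation). -/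
open Matrix MeasureTheory

section AuxProofs
open Matrix MeasureTheory
section
variable {n d R d1 d2 d3 : ℕ}

lemma modeProd_cpT (A : Matrix (Fin d1) (Fin R) ℝ) (B : Matrix (Fin d2) (Fin R) ℝ)
    (C : Matrix (Fin d3) (Fin R) ℝ) (h : Fin d1 → ℝ) (x : Fin d2 → ℝ) (k : Fin d3) :
    modeProd (cpT A B C) h x k
      = ∑ r, (∑ i, A i r * h i) * (∑ j, B j r * x j) * C k r := by
  simp only [modeProd, cpT, Finset.sum_mul, Finset.mul_sum]
  calc (∑ i, ∑ j, ∑ r, A i r * B j r * C k r * h i * x j)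
      = ∑ i, ∑ r, ∑ j, A i r * B j r * C k r * h i * x j :=
        Finset.sum_congr rfl fun i _ => Finset.sum_comm
    _ = ∑ r, ∑ i, ∑ j, A i r * B j r * C k r * h i * x j := Finset.sum_comm
    _ = ∑ r, ∑ j, ∑ i, A i r * B j r * C k r * h i * x j :=
        Finset.sum_congr rfl fun r _ => Finset.sum_comm
    _ = _ := by
        refine Finset.sum_congr rfl fun r _ => Finset.sum_congr rfl fun j _ =>
          Finset.sum_congr rfl fun i _ => ?_
        ring
end
section
variable {n d R : ℕ}

lemma mirnn_as_cprnn (hnR : n ≤ R) (h0 α β1 β2 b : Fin n → ℝ)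
    (U : Matrix (Fin n) (Fin d) ℝ) (V : Matrix (Fin n) (Fin n) ℝ) :
    ∃ (A : Matrix (Fin n) (Fin R) ℝ) (B : Matrix (Fin d) (Fin R) ℝ)
      (C : Matrix (Fin n) (Fin R) ℝ) (U' : Matrix (Fin n) (Fin d) ℝ)
      (V' : Matrix (Fin n) (Fin n) ℝ),
      ∀ x t, mirnnStates id h0 α β1 β2 b U V x t
        = cprnnStates id h0 A B C U' V' b x t := by
  refine ⟨fun i r => if hr : (r : ℕ) < n then α ⟨r, hr⟩ * V ⟨r, hr⟩ i else 0,
    fun j r => if hr : (r : ℕ) < n then U ⟨r, hr⟩ j else 0,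
    fun k r => if r = Fin.castLE hnR k then 1 else 0,
    fun k j => β2 k * U k j, fun k i => β1 k * V k i, fun x t => ?_⟩
  induction t with
  | zero => rfl
  | succ t ih =>
    funext k
    show id _ = id _
    simp only [id]
    rw [← ih]; erw [modeProd_cpT]
    rw [Finset.sum_eq_single (Fin.castLE hnR k)]
    · have hk : ((Fin.castLE hnR k : Fin R) : ℕ) < n := k.2
      rw [if_pos rfl]
      simp only [Fin.coe_castLE, Fin.is_lt, dite_true, Fin.eta, mul_one,
        Matrix.mulVec, dotProduct, mul_assoc, ← Finset.mul_sum]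
    · intro r _ hr; rw [if_neg hr, mul_zero]
    · intro habs; exact absurd (Finset.mem_univ _) habs
end
section
lemma cprank_le {d1 d2 d3 R : ℕ} (T : Fin d1 → Fin d2 → Fin d3 → ℝ)
    (A : Matrix (Fin d1) (Fin R) ℝ) (B : Matrix (Fin d2) (Fin R) ℝ)
    (C : Matrix (Fin d3) (Fin R) ℝ) (h : T = cpT A B C) : cprank T ≤ R :=
  Nat.sInf_le ⟨A, B, C, h⟩

lemma cprank_le_one {d : ℕ} (T : Fin 1 → Fin d → Fin 1 → ℝ) : cprank T ≤ 1 := by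
  refine cprank_le T (fun _ _ => 1) (fun j _ => T 0 j 0) (fun _ _ => 1) ?_
  funext i j k
  have hi : i = 0 := Subsingleton.elim _ _
  have hk : k = 0 := Subsingleton.elim _ _
  simp [cpT, hi, hk]

lemma cprank_zero' {d : ℕ} (T : Fin 0 → Fin d → Fin 0 → ℝ) : cprank T = 0 :=
  Nat.le_zero.mp (cprank_le T (R := 0) (fun i _ => i.elim0) (fun _ r => r.elim0)
    (fun k _ => k.elim0) (funext fun i => i.elim0))

lemma typical_exists {d1 d2 d3 R : ℕ} (h : IsTypicalRank d1 d2 d3 R) :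
    ∃ T : Fin d1 → Fin d2 → Fin d3 → ℝ, cprank T = R := by
  by_contra hc
  push_neg at hc
  have : {T : Fin d1 → Fin d2 → Fin d3 → ℝ | cprank T = R} = ∅ := by
    ext T; simp [hc T]
  rw [IsTypicalRank, this] at h
  simp at h

lemma rtypmax_le {d : ℕ} {n : ℕ} (hn : n ≤ 1) : RtypMax n d n ≤ n := by
  have hb : ∀ R ∈ {R : ℕ | IsTypicalRank n d n R}, R ≤ n := by
    intro R hR
    obtain ⟨T, hT⟩ := typical_exists hR
    interval_cases n
    · rw [← hT]; exact le_of_eq (cprank_zero' T)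
    · rw [← hT]; exact cprank_le_one T
  rcases Set.eq_empty_or_nonempty {R : ℕ | IsTypicalRank n d n R} with he | hne
  · rw [RtypMax, he, csSup_empty]; exact bot_le
  · exact csSup_le hne hb
end
section
/-- indicator matrix used for the witness A and B factors -/
def wAB (m R : ℕ) : Matrix (Fin m) (Fin R) ℝ :=
  fun i r => if (r : ℕ) = 0 then (if (i : ℕ) = 0 then 1 else 0)
    else if (r : ℕ) = 1 then (if (i : ℕ) = 1 then 1 else 0) else 0

def wC (n R : ℕ) : Matrix (Fin n) (Fin R) ℝ :=
  fun k r => if ((r : ℕ) = 0 ∨ (r : ℕ) = 1) ∧ (k : ℕ) = 0 then 1 else 0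

lemma sum_ind {m : ℕ} (a : Fin m) (h : Fin m → ℝ) :
    ∑ i : Fin m, (if (i : ℕ) = (a : ℕ) then (1:ℝ) else 0) * h i = h a := by
  rw [Finset.sum_eq_single a]
  · simp
  · intro i _ hi
    rw [if_neg (fun hc => hi (Fin.ext hc)), zero_mul]
  · simp

lemma witness_modeProd {n d R : ℕ} (hn : 2 ≤ n) (hd : 2 ≤ d) (hR : 2 ≤ R)
    (h : Fin n → ℝ) (x : Fin d → ℝ) (k : Fin n) :
    modeProd (cpT (wAB n R) (wAB d R) (wC n R)) h x k
      = (h ⟨0, by omega⟩ * x ⟨0, by omega⟩ + h ⟨1, by omega⟩ * x ⟨1, by omega⟩)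
          * (if (k : ℕ) = 0 then 1 else 0) := by
  rw [modeProd_cpT]
  have key : ∀ r : Fin R,
      (∑ i, wAB n R i r * h i) * (∑ j, wAB d R j r * x j) * wC n R k r
        = (if (r : ℕ) = 0 then h ⟨0, by omega⟩ * x ⟨0, by omega⟩
              * (if (k : ℕ) = 0 then 1 else 0) else 0)
          + (if (r : ℕ) = 1 then h ⟨1, by omega⟩ * x ⟨1, by omega⟩
              * (if (k : ℕ) = 0 then 1 else 0) else 0) := by
    intro r
    by_cases hr0 : (r : ℕ) = 0
    · have e1 : ∑ i, wAB n R i r * h i = h ⟨0, by omega⟩ := by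
        simpa [wAB, hr0] using sum_ind (⟨0, by omega⟩ : Fin n) h
      have e2 : ∑ j, wAB d R j r * x j = x ⟨0, by omega⟩ := by
        simpa [wAB, hr0] using sum_ind (⟨0, by omega⟩ : Fin d) x
      rw [e1, e2]
      by_cases hk : (k : ℕ) = 0 <;> simp [wC, hr0, hk]
    · by_cases hr1 : (r : ℕ) = 1
      · have e1 : ∑ i, wAB n R i r * h i = h ⟨1, by omega⟩ := by
          simpa [wAB, hr0, hr1] using sum_ind (⟨1, by omega⟩ : Fin n) h
        have e2 : ∑ j, wAB d R j r * x j = x ⟨1, by omega⟩ := by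
          simpa [wAB, hr0, hr1] using sum_ind (⟨1, by omega⟩ : Fin d) x
        rw [e1, e2]
        by_cases hk : (k : ℕ) = 0 <;> simp [wC, hr0, hr1, hk]
      · simp [wAB, wC, hr0, hr1]
  rw [Finset.sum_congr rfl (fun r _ => key r), Finset.sum_add_distrib]
  rw [Finset.sum_eq_single (⟨0, by omega⟩ : Fin R),
      Finset.sum_eq_single (⟨1, by omega⟩ : Fin R)]
  · by_cases hk : (k : ℕ) = 0 <;> simp [hk]
  · intro r _ hr
    rw [if_neg (fun hc => hr (Fin.ext hc))]
  · simp
  · intro r _ hr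
    rw [if_neg (fun hc => hr (Fin.ext hc))]
  · simp
end
section
def wU (n d : ℕ) : Matrix (Fin n) (Fin d) ℝ := fun k j => if (j : ℕ) = (k : ℕ) then 1 else 0

lemma wU_mulVec {n d : ℕ} (hnd : n ≤ d) (x : Fin d → ℝ) (k : Fin n) :
    (wU n d).mulVec x k = x ⟨k, lt_of_lt_of_le k.2 hnd⟩ := by
  simpa [wU, Matrix.mulVec, dotProduct] using
    sum_ind (⟨k, lt_of_lt_of_le k.2 hnd⟩ : Fin d) x

lemma witness_state1 {n d R : ℕ} (hn : 2 ≤ n) (hd : 2 ≤ d) (hR : 2 ≤ R) (hnd : n ≤ d)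
    (x : ℕ → Fin d → ℝ) (k : Fin n) :
    cprnnStates id 0 (wAB n R) (wAB d R) (wC n R) (wU n d) 0 0 x 1 k
      = x 0 ⟨k, lt_of_lt_of_le k.2 hnd⟩ := by
  show id _ = _
  rw [show cprnnStates id 0 (wAB n R) (wAB d R) (wC n R) (wU n d) 0 0 x 0 = 0 from rfl]
  simp only [id_eq]
  rw [witness_modeProd hn hd hR, wU_mulVec hnd]
  simp

lemma witness_state2 {n d R : ℕ} (hn : 2 ≤ n) (hd : 2 ≤ d) (hR : 2 ≤ R) (hnd : n ≤ d)
    (x : ℕ → Fin d → ℝ) :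
    cprnnStates id 0 (wAB n R) (wAB d R) (wC n R) (wU n d) 0 0 x 2 ⟨0, by omega⟩
      = x 0 ⟨0, by omega⟩ * x 1 ⟨0, by omega⟩ + x 0 ⟨1, by omega⟩ * x 1 ⟨1, by omega⟩
        + x 1 ⟨0, by omega⟩ := by
  show id _ = _
  simp only [id_eq]
  rw [witness_modeProd hn hd hR, wU_mulVec hnd,
    witness_state1 hn hd hR hnd x ⟨0, by omega⟩, witness_state1 hn hd hR hnd x ⟨1, by omega⟩]
  simp
end
section
lemma mirnn_state2 {n d : ℕ} (h0 α β1 β2 b : Fin n → ℝ) (U : Matrix (Fin n) (Fin d) ℝ)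
    (V : Matrix (Fin n) (Fin n) ℝ) (a c : Fin d → ℝ) (k0 : Fin n) :
    mirnnStates id h0 α β1 β2 b U V (fun t => if t = 0 then a else c) 2 k0
      = α k0 * V.mulVec (fun k => α k * V.mulVec h0 k * U.mulVec a k
            + β1 k * V.mulVec h0 k + β2 k * U.mulVec a k + b k) k0 * U.mulVec c k0
        + β1 k0 * V.mulVec (fun k => α k * V.mulVec h0 k * U.mulVec a k
            + β1 k * V.mulVec h0 k + β2 k * U.mulVec a k + b k) k0
        + β2 k0 * U.mulVec c k0 + b k0 := by
  have h1 : mirnnStates id h0 α β1 β2 b U V (fun t => if t = 0 then a else c) 1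
      = fun k => α k * V.mulVec h0 k * U.mulVec a k
          + β1 k * V.mulVec h0 k + β2 k * U.mulVec a k + b k := by
    funext k
    show id _ = _
    rw [show mirnnStates id h0 α β1 β2 b U V (fun t => if t = 0 then a else c) 0 = h0 from rfl]
    simp
  show id _ = _
  rw [h1]
  simp
end

theorem mirnn_ssubset_cprnn_linear' (d n R : ℕ) (hnd : n ≤ d) (hnR : n < R)
    (hR : R ≤ RtypMax n d n) :
    HMIRNN d n id ⊂ HCPRNN d n R id := by
  have hn2 : 2 ≤ n := by
    by_contra hc
    push_neg at hc
    have := rtypmax_le (d := d) (n := n) (by omega)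
    omega
  have hd2 : 2 ≤ d := hn2.trans hnd
  have hR2 : 2 ≤ R := by omega
  rw [Set.ssubset_def]
  refine ⟨?_, ?_⟩
  · rintro f ⟨h0, α, β1, β2, b, U, V, hf⟩
    obtain ⟨A, B, C, U', V', heq⟩ := mirnn_as_cprnn (le_of_lt hnR) h0 α β1 β2 b U V
    exact ⟨h0, A, B, C, U', V', b, fun x t => (hf x t).trans (heq x (t + 1))⟩
  · intro hsub
    have hmem : (fun (x : ℕ → Fin d → ℝ) (t : ℕ) =>
        cprnnStates id 0 (wAB n R) (wAB d R) (wC n R) (wU n d) 0 0 x (t + 1))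
        ∈ HCPRNN d n R id :=
      ⟨0, wAB n R, wAB d R, wC n R, wU n d, 0, 0, fun x t => rfl⟩
    obtain ⟨h0, α, β1, β2, b, U, V, hf⟩ := hsub hmem
    set k0 : Fin n := ⟨0, by omega⟩ with hk0
    set j0 : Fin d := ⟨0, by omega⟩ with hj0
    set j1 : Fin d := ⟨1, by omega⟩ with hj1
    -- the fundamental equation
    have E : ∀ a c : Fin d → ℝ,
        a j0 * c j0 + a j1 * c j1 + c j0
          = α k0 * V.mulVec (fun k => α k * V.mulVec h0 k * U.mulVec a k
                + β1 k * V.mulVec h0 k + β2 k * U.mulVec a k + b k) k0 * U.mulVec c k0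
            + β1 k0 * V.mulVec (fun k => α k * V.mulVec h0 k * U.mulVec a k
                + β1 k * V.mulVec h0 k + β2 k * U.mulVec a k + b k) k0
            + β2 k0 * U.mulVec c k0 + b k0 := by
      intro a c
      have h1 := congrFun (hf (fun t => if t = 0 then a else c) 1) k0
      simp only [Nat.reduceAdd] at h1
      rw [witness_state2 hn2 hd2 hR2 hnd, mirnn_state2] at h1
      norm_num at h1
      exact h1
    set W : (Fin d → ℝ) → ℝ := fun a => V.mulVec (fun k => α k * V.mulVec h0 k * U.mulVec a k
        + β1 k * V.mulVec h0 k + β2 k * U.mulVec a k + b k) k0 with hW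
    set u : (Fin d → ℝ) → ℝ := fun c => U.mulVec c k0 with hu
    have E' : ∀ a c : Fin d → ℝ, a j0 * c j0 + a j1 * c j1 + c j0
        = α k0 * W a * u c + β1 k0 * W a + β2 k0 * u c + b k0 := E
    -- evaluate at basis vectors
    set e0 : Fin d → ℝ := fun j => if j = j0 then 1 else 0 with he0
    set e1 : Fin d → ℝ := fun j => if j = j1 then 1 else 0 with he1
    have hj01 : j0 ≠ j1 := by simp [hj0, hj1, Fin.ext_iff]
    have v00 : e0 j0 = 1 := if_pos rfl
    have v01 : e0 j1 = 0 := if_neg (Ne.symm hj01)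
    have v10 : e1 j0 = 0 := if_neg hj01
    have v11 : e1 j1 = 1 := if_pos rfl
    have d1 : α k0 * (W e0 - W 0) * (u e0 - u 0) = 1 := by
      have h1 := E' e0 e0; have h5 := E' e0 0; have h7 := E' (0 : Fin d → ℝ) e0
      have h9 := E' (0 : Fin d → ℝ) 0
      simp only [v00, v01, v10, v11, Pi.zero_apply] at h1 h5 h7 h9
      linear_combination -h1 + h5 + h7 - h9
    have d2 : α k0 * (W e1 - W 0) * (u e1 - u 0) = 1 := by
      have h4 := E' e1 e1; have h6 := E' e1 0; have h8 := E' (0 : Fin d → ℝ) e1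
      have h9 := E' (0 : Fin d → ℝ) 0
      simp only [v00, v01, v10, v11, Pi.zero_apply] at h4 h6 h8 h9
      linear_combination -h4 + h6 + h8 - h9
    have d3 : α k0 * (W e0 - W 0) * (u e1 - u 0) = 0 := by
      have h2 := E' e0 e1; have h5 := E' e0 0; have h8 := E' (0 : Fin d → ℝ) e1
      have h9 := E' (0 : Fin d → ℝ) 0
      simp only [v00, v01, v10, v11, Pi.zero_apply] at h2 h5 h8 h9
      linear_combination -h2 + h5 + h8 - h9
    have d4 : α k0 * (W e1 - W 0) * (u e0 - u 0) = 0 := by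
      have h3 := E' e1 e0; have h6 := E' e1 0; have h7 := E' (0 : Fin d → ℝ) e0
      have h9 := E' (0 : Fin d → ℝ) 0
      simp only [v00, v01, v10, v11, Pi.zero_apply] at h3 h6 h7 h9
      linear_combination -h3 + h6 + h7 - h9
    have hh : (α k0 * (W e0 - W 0) * (u e0 - u 0)) * (α k0 * (W e1 - W 0) * (u e1 - u 0))
        = (α k0 * (W e0 - W 0) * (u e1 - u 0)) * (α k0 * (W e1 - W 0) * (u e0 - u 0)) := by
      ring
    rw [d1, d2, d3, d4] at hh
    norm_num at hh

end AuxProofs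

/-- If `n ≤ d` and the activation is linear (identity), then for every
`R` with `n < R ≤ R_typ-max(n,d,n)`, `H_MIRNN(n) ⊊ H_CPRNN(R,n)`. -/
theorem mirnn_ssubset_cprnn_linear (d n R : ℕ) (hnd : n ≤ d) (hnR : n < R)
    (hR : R ≤ RtypMax n d n) :
    HMIRNN d n id ⊂ HCPRNN d n R id :=
  mirnn_ssubset_cprnn_linear' d n R hnd hnR hR
end

section
/- For every input dimension d ≥ 1, hidden size n ≥ 1, and every activation function σ : ℝ → ℝ, one has H_MIRNN(n) ⊆ H_CPRNN(n,n), i.e. every MIRNN of hidden size n computes a function computable by a CPRNN of rank equal to its hidden size n (both sides taken with the same d and the same σ). -/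
open Matrix MeasureTheory

lemma mirnn_to_cprnn_aux {n d : ℕ} (σ : ℝ → ℝ) (h0 α β1 β2 b : Fin n → ℝ)
    (U : Matrix (Fin n) (Fin d) ℝ) (V : Matrix (Fin n) (Fin n) ℝ) (x : ℕ → Fin d → ℝ) :
    ∀ t, cprnnStates σ h0 (fun i r => V r i) (fun j r => U r j)
      (fun k r => if k = r then α k else 0)
      (Matrix.of fun k j => β2 k * U k j) (Matrix.of fun k i => β1 k * V k i) b x t
      = mirnnStates σ h0 α β1 β2 b U V x t := by
  intro t
  induction t with
  | zero => rfl
  | succ t ih =>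
    funext k
    simp only [cprnnStates, mirnnStates, ih]
    set h := mirnnStates σ h0 α β1 β2 b U V x t
    congr 1
    have h1 : modeProd (cpT (fun i r => V r i) (fun j r => U r j)
        (fun k r => if k = r then α k else 0)) h (x t) k
        = α k * V.mulVec h k * U.mulVec (x t) k := by
      simp only [modeProd, cpT, mul_ite, mul_zero, Finset.sum_ite_eq, Finset.mem_univ, if_true,
        Matrix.mulVec, dotProduct]
      rw [mul_assoc, Finset.sum_mul_sum]
      simp only [Finset.mul_sum]
      apply Finset.sum_congr rfl; intro i _
      apply Finset.sum_congr rfl; intro j _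
      ring
    have h2 : (Matrix.of fun k i => β1 k * V k i).mulVec h k = β1 k * V.mulVec h k := by
      simp [Matrix.mulVec, dotProduct, Finset.mul_sum, mul_assoc]
    have h3 : (Matrix.of fun k j => β2 k * U k j).mulVec (x t) k = β2 k * U.mulVec (x t) k := by
      simp [Matrix.mulVec, dotProduct, Finset.mul_sum, mul_assoc]
    rw [h1, h2, h3]

/-- For every `d ≥ 1`, `n ≥ 1` and every activation `σ`,
`H_MIRNN(n) ⊆ H_CPRNN(n,n)`. -/
theorem mirnn_subset_cprnn_rank_n (d n : ℕ) (hd : 1 ≤ d) (hn : 1 ≤ n) (σ : ℝ → ℝ) :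
    HMIRNN d n σ ⊆ HCPRNN d n n σ := by
  rintro f ⟨h0, α, β1, β2, b, U, V, hf⟩
  exact ⟨h0, (fun i r => V r i), (fun j r => U r j), (fun k r => if k = r then α k else 0),
    (Matrix.of fun k j => β2 k * U k j), (Matrix.of fun k i => β1 k * V k i), b,
    fun x t => by rw [hf, mirnn_to_cprnn_aux]⟩
end

section
/- Let U be a connected open subset of ℝ^d and let f : U → ℝ be a real analytic function that is not identically zero on U. Then the zero set Z(f) = {x ∈ U : f(x) = 0} has Lebesgue measure zero. -/
open Matrix MeasureTheory

section AuxZeroSet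

open Filter Topology Metric Set MeasureTheory


lemma aux_countable_isolated {S : Set ℝ} (h : ∀ t ∈ S, ∀ᶠ u in 𝓝[≠] t, u ∉ S) :
    S.Countable := by
  have hd : DiscreteTopology S := by
    rw [discreteTopology_subtype_iff]
    intro t ht
    rw [inf_principal_eq_bot]
    exact h t ht
  have : Countable S := TopologicalSpace.separableSpace_iff_countable.mp inferInstance
  exact Set.countable_coe_iff.mp this

lemma aux_ev_zero_iteratedDeriv' {h : ℝ → ℝ} {t : ℝ} (he : h =ᶠ[𝓝 t] 0) :
    ∀ k : ℕ, iteratedDeriv k h =ᶠ[𝓝 t] 0 := by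
  intro k
  induction k with
  | zero => simpa [iteratedDeriv_zero] using he
  | succ k ih =>
    have hd := ih.deriv
    simp only [iteratedDeriv_succ]
    refine hd.trans ?_
    filter_upwards with u
    show deriv (fun _ => (0:ℝ)) u = 0
    simp

lemma aux_ev_zero_iteratedDeriv {h : ℝ → ℝ} {t : ℝ} (he : h =ᶠ[𝓝 t] 0) (k : ℕ) :
    iteratedDeriv k h t = 0 := by
  simpa using (aux_ev_zero_iteratedDeriv' he k).eq_of_nhds

lemma aux_all_deriv_zero_ev_zero {h : ℝ → ℝ} {t : ℝ} (ha : AnalyticAt ℝ h t)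
    (hd : ∀ k, iteratedDeriv k h t = 0) : h =ᶠ[𝓝 t] 0 := by
  obtain ⟨p, r, hp⟩ := ha
  have key : ∀ y ∈ EMetric.ball (0:ℝ) r, h (t + y) = 0 := by
    intro y hy
    have hs := hp.hasSum_iteratedFDeriv (𝕜 := ℝ) hy
    have hz : ∀ n : ℕ, (((Nat.factorial n : ℝ))⁻¹ • iteratedFDeriv ℝ n h t fun _ => y) = 0 := by
      intro n
      have h1 : (iteratedFDeriv ℝ n h t fun _ => y) =
          (∏ _i : Fin n, y) • iteratedFDeriv ℝ n h t fun _ => (1:ℝ) := by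
        rw [← ContinuousMultilinearMap.map_smul_univ]
        simp
      rw [h1, ← iteratedDeriv_eq_iteratedFDeriv, hd n]
      simp
    have : HasSum (fun n : ℕ => (0:ℝ)) (h (t + y)) := by
      have e : (fun n : ℕ => (0:ℝ)) = fun n => ((Nat.factorial n : ℝ))⁻¹ • iteratedFDeriv ℝ n h t fun _ => y :=
        funext fun n => (hz n).symm
      rw [e]; exact hs
    simpa using this.unique hasSum_zero
  have hball : EMetric.ball t r ∈ 𝓝 t := EMetric.ball_mem_nhds t hp.r_pos
  filter_upwards [hball] with u hu
  have : u - t ∈ EMetric.ball (0:ℝ) r := by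
    show edist (u - t) 0 < r
    have h0 : edist (u - t) 0 = edist u t := by simpa using edist_sub_right u t t
    rw [h0]; exact hu
  simpa using key (u - t) this

lemma aux_meas {E : Type*} [TopologicalSpace E] [MeasurableSpace E] [OpensMeasurableSpace E]
    {V : Set E} (hV : IsOpen V) {h : E → ℝ} (hc : ContinuousOn h V) :
    MeasurableSet {p ∈ V | h p = 0} := by
  have heq : {p ∈ V | h p = 0} = ⋂ n : ℕ, V ∩ h ⁻¹' Metric.ball (0:ℝ) (1/(n+1)) := by
    ext p
    simp only [Set.mem_setOf_eq, Set.mem_iInter, Set.mem_inter_iff, Set.mem_preimage,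
      Metric.mem_ball, Real.dist_eq, sub_zero]
    constructor
    · rintro ⟨hpV, hp0⟩ n
      refine ⟨hpV, ?_⟩
      rw [hp0]
      simp
      positivity
    · intro hp
      refine ⟨(hp 0).1, ?_⟩
      by_contra habs
      obtain ⟨n, hn⟩ := exists_nat_one_div_lt (abs_pos.mpr habs)
      exact absurd ((hp n).2) (not_lt.mpr hn.le)
  rw [heq]
  exact MeasurableSet.iInter fun n =>
    (hc.isOpen_inter_preimage hV Metric.isOpen_ball).measurableSet

noncomputable def auxGS {d : ℕ} (g : ℝ × (Fin d → ℝ) → ℝ) : ℕ → ℝ × (Fin d → ℝ) → ℝ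
  | 0 => g
  | k + 1 => fun p => fderiv ℝ (auxGS g k) p ((1:ℝ), (0 : Fin d → ℝ))

lemma auxGS_analytic {d : ℕ} {V : Set (ℝ × (Fin d → ℝ))}
    {g : ℝ × (Fin d → ℝ) → ℝ} (hg : AnalyticOnNhd ℝ g V) :
    ∀ k, AnalyticOnNhd ℝ (auxGS g k) V := by
  intro k
  induction k with
  | zero => exact hg
  | succ k ih =>
    have h1 : AnalyticOnNhd ℝ (fderiv ℝ (auxGS g k)) V := ih.fderiv
    exact (ContinuousLinearMap.apply ℝ ℝ ((1:ℝ), (0 : Fin d → ℝ))).comp_analyticOnNhd h1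

lemma auxGS_slice {d : ℕ} {V : Set (ℝ × (Fin d → ℝ))} (hV : IsOpen V)
    {g : ℝ × (Fin d → ℝ) → ℝ} (hg : AnalyticOnNhd ℝ g V) (k : ℕ) :
    ∀ t y, (t, y) ∈ V → auxGS g k (t, y) = iteratedDeriv k (fun u => g (u, y)) t := by
  induction k with
  | zero => intro t y _; simp [auxGS, iteratedDeriv_zero]
  | succ k ih =>
    intro t y hty
    have hmem : ∀ᶠ u in 𝓝 t, (u, y) ∈ V := by
      have hc : Continuous (fun u : ℝ => (u, y)) := continuous_id.prodMk continuous_const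
      exact hc.continuousAt.preimage_mem_nhds (hV.mem_nhds hty)
    have hDk : HasFDerivAt (auxGS g k) (fderiv ℝ (auxGS g k) (t, y)) (t, y) :=
      ((auxGS_analytic hg k) _ hty).differentiableAt.hasFDerivAt
    have hc : HasDerivAt (fun u : ℝ => (u, y)) ((1:ℝ), (0 : Fin d → ℝ)) t :=
      (hasDerivAt_id t).prodMk (hasDerivAt_const t y)
    have hcomp : HasDerivAt (fun u => auxGS g k (u, y))
        (fderiv ℝ (auxGS g k) (t, y) ((1:ℝ), (0 : Fin d → ℝ))) t := hDk.comp_hasDerivAt t hc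
    have h1 : auxGS g (k+1) (t, y) = deriv (fun u => auxGS g k (u, y)) t := by
      rw [hcomp.deriv]; rfl
    have h2 : (fun u => auxGS g k (u, y)) =ᶠ[𝓝 t]
        (fun u => iteratedDeriv k (fun u' => g (u', y)) u) := by
      filter_upwards [hmem] with u hu
      exact ih u y hu
    rw [h1, h2.deriv_eq, ← iteratedDeriv_succ]

noncomputable def auxA (d : ℕ) : (ℝ × (Fin d → ℝ)) →L[ℝ] (Fin (d+1) → ℝ) :=
  ContinuousLinearMap.pi (fun i => Fin.cases (ContinuousLinearMap.fst ℝ ℝ (Fin d → ℝ))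
    (fun j => (ContinuousLinearMap.proj j).comp (ContinuousLinearMap.snd ℝ ℝ (Fin d → ℝ))) i)

noncomputable def auxB (d : ℕ) : (Fin (d+1) → ℝ) →L[ℝ] ℝ × (Fin d → ℝ) :=
  (ContinuousLinearMap.proj 0).prod (ContinuousLinearMap.pi fun j : Fin d =>
    ContinuousLinearMap.proj (j.succ))

lemma auxA_apply_zero (d : ℕ) (q : ℝ × (Fin d → ℝ)) : auxA d q 0 = q.1 := rfl
lemma auxA_apply_succ (d : ℕ) (q : ℝ × (Fin d → ℝ)) (j : Fin d) : auxA d q j.succ = q.2 j := rfl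
lemma auxB_apply (d : ℕ) (x : Fin (d+1) → ℝ) : auxB d x = (x 0, fun j => x j.succ) := rfl

lemma auxAB (d : ℕ) (x : Fin (d+1) → ℝ) : auxA d (auxB d x) = x := by
  funext i
  induction i using Fin.cases with
  | zero => rfl
  | succ j => rfl

lemma auxBA (d : ℕ) (q : ℝ × (Fin d → ℝ)) : auxB d (auxA d q) = q := rfl

lemma auxE_eq (d : ℕ) :
    (⇑(MeasurableEquiv.piFinSuccAbove (fun _ : Fin (d+1) => ℝ) 0) : (Fin (d+1) → ℝ) → ℝ × (Fin d → ℝ))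
      = ⇑(auxB d) := by
  funext x
  rfl
lemma aux_core (d : ℕ)
    (IH : ∀ (U : Set (Fin d → ℝ)), IsOpen U → ∀ f : (Fin d → ℝ) → ℝ, AnalyticOnNhd ℝ f U →
      (∀ x ∈ U, ¬ (f =ᶠ[𝓝 x] 0)) → volume {x ∈ U | f x = 0} = 0)
    (V : Set (ℝ × (Fin d → ℝ))) (hV : IsOpen V) (g : ℝ × (Fin d → ℝ) → ℝ)
    (hg : AnalyticOnNhd ℝ g V) (hne : ∀ p ∈ V, ¬ (g =ᶠ[𝓝 p] 0)) :
    volume {p ∈ V | g p = 0} = 0 := by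
  classical
  set Z := {p ∈ V | g p = 0} with hZdef
  set W := {p ∈ V | ∀ k, auxGS g k p = 0} with hWdef
  have hgsA : ∀ k, AnalyticOnNhd ℝ (auxGS g k) V := auxGS_analytic hg
  have hmeasZk : ∀ k, MeasurableSet {p ∈ V | auxGS g k p = 0} := fun k =>
    aux_meas hV (hgsA k).continuousOn
  have hmeasZ : MeasurableSet Z := hmeasZk 0
  have hmeasW : MeasurableSet W := by
    have hW : W = ⋂ k, {p ∈ V | auxGS g k p = 0} := by
      ext p
      simp only [hWdef, Set.mem_setOf_eq, Set.mem_iInter]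
      exact ⟨fun ⟨h1, h2⟩ k => ⟨h1, h2 k⟩, fun h => ⟨(h 0).1, fun k => (h k).2⟩⟩
    rw [hW]
    exact MeasurableSet.iInter fun k => hmeasZk k
  have hslice : ∀ y t, (t, y) ∈ V → AnalyticAt ℝ (fun u => g (u, y)) t := by
    intro y t hty
    have hf : AnalyticAt ℝ (fun u : ℝ => (u, y)) t := (analyticAt_id).prod analyticAt_const
    exact AnalyticAt.comp (f := fun u : ℝ => (u, y)) (hg _ hty) hf
  -- Part 1 : Z \ W is null
  have hZW : volume (Z \ W) = 0 := by
    have hsm : MeasurableSet (Z \ W) := hmeasZ.diff hmeasW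
    have hsm' : MeasurableSet (Prod.swap ⁻¹' (Z \ W) : Set ((Fin d → ℝ) × ℝ)) :=
      hsm.preimage measurable_swap
    have hkey : ((volume : Measure (Fin d → ℝ)).prod (volume : Measure ℝ))
        (Prod.swap ⁻¹' (Z \ W)) = volume (Z \ W) := by
      rw [← Measure.prod_swap, Measure.map_apply measurable_swap hsm']
      have hss : Prod.swap ⁻¹' (Prod.swap ⁻¹' (Z \ W)) = Z \ W := by ext p; simp
      rw [hss, ← Measure.volume_eq_prod]
    rw [← hkey]
    rw [Measure.measure_prod_null hsm']
    refine Filter.Eventually.of_forall fun y => ?_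
    have hset : (Prod.mk y ⁻¹' (Prod.swap ⁻¹' (Z \ W)) : Set ℝ) = {t | (t, y) ∈ Z \ W} := by
      ext t; simp
    show volume (Prod.mk y ⁻¹' (Prod.swap ⁻¹' (Z \ W))) = 0
    rw [hset]
    refine Set.Countable.measure_zero ?_ _
    apply aux_countable_isolated
    intro t ht
    have htV : (t, y) ∈ V := ht.1.1
    have hnev : ¬ ((fun u => g (u, y)) =ᶠ[𝓝 t] 0) := by
      intro hev
      refine ht.2 ⟨htV, fun k => ?_⟩
      rw [auxGS_slice hV hg k t y htV]
      exact aux_ev_zero_iteratedDeriv hev k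
    rcases (hslice y t htV).eventually_eq_zero_or_eventually_ne_zero with h | h
    · exact absurd h hnev
    · filter_upwards [h] with u hu hus
      exact hu hus.1.2
  -- Part 2 : W is null
  have hWnull : volume W = 0 := by
    have key : ∀ p : W, ∃ O : Set (ℝ × (Fin d → ℝ)), IsOpen O ∧ (p : ℝ × (Fin d → ℝ)) ∈ O ∧
        volume (W ∩ O) = 0 := by
      rintro ⟨⟨b, a⟩, hpW⟩
      have hpV : (b, a) ∈ V := hpW.1
      obtain ⟨ε, hε, hball⟩ := Metric.isOpen_iff.mp hV _ hpV
      refine ⟨Metric.ball (b, a) ε, Metric.isOpen_ball, Metric.mem_ball_self hε, ?_⟩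
      rw [← ball_prod_same] at hball
      by_cases hcase : ∃ k, ∃ y ∈ Metric.ball a ε, auxGS g k (b, y) ≠ 0
      · obtain ⟨k, y₀, hy₀, hky⟩ := hcase
        set φ : (Fin d → ℝ) → ℝ := fun y => auxGS g k (b, y) with hφ
        have hφA : AnalyticOnNhd ℝ φ (Metric.ball a ε) := by
          intro y hy
          have hf : AnalyticAt ℝ (fun y' : Fin d → ℝ => ((b : ℝ), y')) y :=
            analyticAt_const.prod (analyticAt_id)
          exact AnalyticAt.comp (f := fun y' : Fin d → ℝ => ((b : ℝ), y')) ((hgsA k) (b, y) (hball ⟨mem_ball_self hε, hy⟩)) hf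
        have hφne : ∀ y ∈ Metric.ball a ε, ¬ (φ =ᶠ[𝓝 y] 0) := fun y hy hev =>
          hky (hφA.eqOn_zero_of_preconnected_of_eventuallyEq_zero
            (convex_ball a ε).isPreconnected hy hev hy₀)
        have hNull := IH _ Metric.isOpen_ball φ hφA hφne
        have hsub : W ∩ Metric.ball (b, a) ε ⊆
            Metric.ball b ε ×ˢ {y ∈ Metric.ball a ε | φ y = 0} := by
          rintro ⟨t, y⟩ ⟨hW', hmemball⟩
          rw [← ball_prod_same] at hmemball
          obtain ⟨ht, hy⟩ := hmemball
          refine ⟨ht, hy, ?_⟩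
          have hbyV : (b, y) ∈ V := hball ⟨mem_ball_self hε, hy⟩
          have hSlice : AnalyticOnNhd ℝ (fun u => g (u, y)) (Metric.ball b ε) := fun u hu =>
            hslice y u (hball ⟨hu, hy⟩)
          have hevt : (fun u => g (u, y)) =ᶠ[𝓝 t] 0 := by
            apply aux_all_deriv_zero_ev_zero (hslice y t hW'.1)
            intro j
            rw [← auxGS_slice hV hg j t y hW'.1]
            exact hW'.2 j
          have hEq : EqOn (fun u => g (u, y)) 0 (Metric.ball b ε) :=
            hSlice.eqOn_zero_of_preconnected_of_eventuallyEq_zero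
              (convex_ball b ε).isPreconnected ht hevt
          have hevb : (fun u => g (u, y)) =ᶠ[𝓝 b] 0 :=
            Filter.eventuallyEq_of_mem (Metric.isOpen_ball.mem_nhds (mem_ball_self hε)) hEq
          rw [hφ]
          simp only []
          rw [auxGS_slice hV hg k b y hbyV]
          exact aux_ev_zero_iteratedDeriv hevb k
        refine measure_mono_null hsub ?_
        rw [Measure.volume_eq_prod, Measure.prod_prod, hNull, mul_zero]
      · push_neg at hcase
        exfalso
        apply hne (b, a) hpV
        have hzero : ∀ y ∈ Metric.ball a ε, EqOn (fun u => g (u, y)) 0 (Metric.ball b ε) := by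
          intro y hy
          have hbyV : (b, y) ∈ V := hball ⟨mem_ball_self hε, hy⟩
          have hSlice : AnalyticOnNhd ℝ (fun u => g (u, y)) (Metric.ball b ε) := fun u hu =>
            hslice y u (hball ⟨hu, hy⟩)
          apply hSlice.eqOn_zero_of_preconnected_of_eventuallyEq_zero
            (convex_ball b ε).isPreconnected (mem_ball_self hε)
          apply aux_all_deriv_zero_ev_zero (hslice y b hbyV)
          intro j
          rw [← auxGS_slice hV hg j b y hbyV]
          exact hcase j y hy
        have hball' : Metric.ball ((b : ℝ), a) ε ∈ 𝓝 (b, a) :=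
          Metric.isOpen_ball.mem_nhds (Metric.mem_ball_self hε)
        filter_upwards [hball'] with q hq
        rw [← ball_prod_same] at hq
        exact hzero q.2 hq.2 hq.1
    choose O hOopen hOmem hOnull using key
    obtain ⟨T, hTc, hTeq⟩ := TopologicalSpace.isOpen_iUnion_countable O hOopen
    have hWsub : W ⊆ ⋃ p ∈ T, (W ∩ O p) := by
      intro x hx
      have h1 : x ∈ ⋃ p : W, O p := mem_iUnion.mpr ⟨⟨x, hx⟩, hOmem _⟩
      rw [← hTeq] at h1
      obtain ⟨p, hpT, hpx⟩ := mem_iUnion₂.mp h1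
      exact mem_iUnion₂.mpr ⟨p, hpT, hx, hpx⟩
    refine measure_mono_null hWsub ?_
    exact (measure_biUnion_null_iff hTc).mpr fun p _ => hOnull p
  have hsub : Z ⊆ (Z \ W) ∪ W := fun p hp => by
    by_cases h : p ∈ W
    · exact Or.inr h
    · exact Or.inl ⟨hp, h⟩
  exact measure_mono_null hsub (measure_union_null hZW hWnull)
theorem aux_main : ∀ (d : ℕ) (U : Set (Fin d → ℝ)), IsOpen U →
    ∀ f : (Fin d → ℝ) → ℝ, AnalyticOnNhd ℝ f U →
    (∀ x ∈ U, ¬ (f =ᶠ[𝓝 x] 0)) → volume {x ∈ U | f x = 0} = 0 := by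
  intro d
  induction d with
  | zero =>
    intro U hU f hf hne
    have hZ : {x ∈ U | f x = 0} = ∅ := by
      ext x
      simp only [Set.mem_setOf_eq, Set.mem_empty_iff_false, iff_false, not_and]
      intro hxU hfx
      refine hne x hxU (Filter.Eventually.of_forall fun y => ?_)
      have hyx : y = x := Subsingleton.elim _ _
      rw [hyx]
      exact hfx
    rw [hZ, measure_empty]
  | succ d IH =>
    intro U hU f hf hne
    set e := MeasurableEquiv.piFinSuccAbove (fun _ : Fin (d+1) => ℝ) 0 with he
    have mp : MeasurePreserving e volume volume :=
      volume_preserving_piFinSuccAbove (fun _ : Fin (d+1) => ℝ) 0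
    set V : Set (ℝ × (Fin d → ℝ)) := ⇑(auxA d) ⁻¹' U with hVdef
    have hVopen : IsOpen V := hU.preimage (auxA d).continuous
    set g : ℝ × (Fin d → ℝ) → ℝ := f ∘ ⇑(auxA d) with hgdef
    have hg : AnalyticOnNhd ℝ g V := fun q hq => ((hf _ hq).comp ((auxA d).analyticAt q))
    have hfg : f = g ∘ ⇑(auxB d) := by
      funext x
      simp [hgdef, Function.comp, auxAB d x]
    have hgne : ∀ q ∈ V, ¬ (g =ᶠ[𝓝 q] 0) := by
      intro q hq hev
      apply hne (auxA d q) hq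
      have hBt : Filter.Tendsto ⇑(auxB d) (𝓝 (auxA d q)) (𝓝 q) := by
        have h1 : Filter.Tendsto ⇑(auxB d) (𝓝 (auxA d q)) (𝓝 (auxB d (auxA d q))) :=
          (auxB d).continuous.continuousAt
        rwa [auxBA d q] at h1
      have h2 := hev.comp_tendsto hBt
      rw [hfg]
      refine h2.mono fun x hx => ?_
      simpa using hx
    have hcore := aux_core d IH V hVopen g hg hgne
    have hZeq : {x ∈ U | f x = 0} = ⇑e ⁻¹' {q ∈ V | g q = 0} := by
      ext x
      rw [Set.mem_preimage]
      have hex : e x = auxB d x := by rw [auxE_eq d]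
      rw [hex]
      simp only [Set.mem_setOf_eq, hVdef, Set.mem_preimage, hgdef, Function.comp,
        auxAB d x]
    rw [hZeq, mp.measure_preimage (aux_meas hVopen hg.continuousOn).nullMeasurableSet, hcore]

end AuxZeroSet

/-- the zero set of a real analytic function on a connected open subset
of `ℝ^d` which is not identically zero has Lebesgue measure zero. -/
theorem zero_set_analytic_measure_zero (d : ℕ) (U : Set (Fin d → ℝ)) (hU : IsOpen U)
    (hUc : IsConnected U) (f : (Fin d → ℝ) → ℝ) (hf : AnalyticOn ℝ f U)
    (hne : ∃ x ∈ U, f x ≠ 0) :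
    volume {x ∈ U | f x = 0} = 0 := by
  have hfN : AnalyticOnNhd ℝ f U := (hU.analyticOn_iff_analyticOnNhd).mp hf
  obtain ⟨x₀, hx₀, hfx₀⟩ := hne
  have hnev : ∀ x ∈ U, ¬ f =ᶠ[nhds x] 0 := by
    intro x hx hev
    have := hfN.eqOn_zero_of_preconnected_of_eventuallyEq_zero hUc.isPreconnected hx hev hx₀
    simpa using hfx₀ this
  exact aux_main d U hU f hfN hnev
end

section
/- Let h⁰ ∈ ℝ^n, A, C ∈ ℝ^{n×R}, B ∈ ℝ^{d×R} be parameters of a CPBIRNN with activation σ : ℝ → ℝ, and define the second pre-activation map a₂(x¹,x²) = [[A,B,C]] ×₁ σ([[A,B,C]] ×₁ h⁰ ×₂ x¹) ×₂ x² ∈ ℝ^n. Define the tensor S ∈ ℝ^{d×d×n} by S_{ijk} = [a₂(e_i,e_j)]_k, where e_i is the i-th standard basis vector of ℝ^d. Then S = [[σ(B diag(Aᵀh⁰) Cᵀ) A, B, C]], where σ is applied entrywise to the matrix B diag(Aᵀh⁰) Cᵀ and diag(v) is the diagonal matrix with diagonal v; consequently rank_CP(S) ≤ rank_CP([[A,B,C]])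 ≤ R. -/
open Matrix MeasureTheory

/-- Multiplying the first factor matrix on the left gives a tensor contraction
along the first mode. -/
lemma cpT_matmul_left {d1 d2 d3 R m : ℕ} (M : Matrix (Fin d1) (Fin m) ℝ)
    (A : Matrix (Fin m) (Fin R) ℝ) (B : Matrix (Fin d2) (Fin R) ℝ)
    (C : Matrix (Fin d3) (Fin R) ℝ) (i : Fin d1) (j : Fin d2) (k : Fin d3) :
    cpT (M * A) B C i j k = ∑ l, M i l * cpT A B C l j k := by
  simp only [cpT, Matrix.mul_apply, Finset.sum_mul, Finset.mul_sum]
  rw [Finset.sum_comm]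
  congr 1; ext l; congr 1; ext r; ring

lemma modeProd_single {d1 d2 d3 : ℕ} (T : Fin d1 → Fin d2 → Fin d3 → ℝ)
    (u : Fin d1 → ℝ) (j : Fin d2) (k : Fin d3) :
    modeProd T u (Pi.single j 1) k = ∑ i, T i j k * u i := by
  simp only [modeProd]
  congr 1; ext i
  rw [Finset.sum_eq_single j]
  · simp
  · intro b _ hb; simp [Pi.single_apply, hb]
  · simp

/-- the tensor `S` collecting the second pre-activations of a CPBIRNN on
length-2 one-hot sequences satisfies `S = [[σ(B diag(Aᵀh⁰) Cᵀ) A, B, C]]`, hence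
`rank_CP(S) ≤ rank_CP([[A,B,C]]) ≤ R`. -/
theorem second_preactivation_tensor_cp {n d R : ℕ} (σ : ℝ → ℝ) (h0 : Fin n → ℝ)
    (A : Matrix (Fin n) (Fin R) ℝ) (B : Matrix (Fin d) (Fin R) ℝ)
    (C : Matrix (Fin n) (Fin R) ℝ)
    (a2 : (Fin d → ℝ) → (Fin d → ℝ) → Fin n → ℝ)
    (ha2 : ∀ x1 x2, a2 x1 x2 =
      modeProd (cpT A B C) (fun l => σ (modeProd (cpT A B C) h0 x1 l)) x2)
    (S : Fin d → Fin d → Fin n → ℝ)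
    (hS : ∀ i j k, S i j k = a2 (Pi.single i 1) (Pi.single j 1) k) :
    S = cpT (((B * Matrix.diagonal (Aᵀ.mulVec h0) * Cᵀ).map σ) * A) B C ∧
    cprank S ≤ cprank (cpT A B C) ∧ cprank (cpT A B C) ≤ R := by
  set T := cpT A B C with hT
  set M : Matrix (Fin d) (Fin n) ℝ := fun i l => σ (∑ m, T m i l * h0 m) with hM
  -- S i j k = ∑ l, M i l * T l j k
  have hSform : ∀ i j k, S i j k = ∑ l, M i l * T l j k := by
    intro i j k
    rw [hS, ha2, modeProd_single]
    congr 1; ext l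
    rw [modeProd_single, mul_comm]
  -- Any CP decomposition of T yields one for S via M
  have key : ∀ {R' : ℕ} (A' : Matrix (Fin n) (Fin R') ℝ) (B' : Matrix (Fin d) (Fin R') ℝ)
      (C' : Matrix (Fin n) (Fin R') ℝ), T = cpT A' B' C' → S = cpT (M * A') B' C' := by
    intro R' A' B' C' hdec
    funext i j k
    rw [hSform, cpT_matmul_left, hdec]
  -- The stated factorization
  have hMeq : M = (B * Matrix.diagonal (Aᵀ.mulVec h0) * Cᵀ).map σ := by
    funext i l
    simp only [hM, Matrix.map_apply, Matrix.mul_apply, Matrix.diagonal_apply,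
      Matrix.transpose_apply, Matrix.mulVec, dotProduct, hT, cpT]
    congr 1
    simp only [mul_ite, mul_zero, Finset.sum_ite_eq', Finset.mem_univ, if_true,
      Finset.sum_mul, Finset.mul_sum]
    rw [Finset.sum_comm]
    congr 1; ext m; congr 1; ext r; ring
  have hSeq : S = cpT (((B * Matrix.diagonal (Aᵀ.mulVec h0) * Cᵀ).map σ) * A) B C := by
    rw [← hMeq]; exact key A B C rfl
  refine ⟨hSeq, ?_, ?_⟩
  · -- cprank S ≤ cprank T
    have hne : (cprank T) ∈ {R' : ℕ | ∃ (A' : Matrix (Fin n) (Fin R') ℝ)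
        (B' : Matrix (Fin d) (Fin R') ℝ) (C' : Matrix (Fin n) (Fin R') ℝ),
        T = cpT A' B' C'} := by
      apply Nat.sInf_mem
      exact ⟨R, A, B, C, rfl⟩
    obtain ⟨A', B', C', hdec⟩ := hne
    exact Nat.sInf_le ⟨M * A', B', C', key A' B' C' hdec⟩
  · exact Nat.sInf_le ⟨A, B, C, rfl⟩
end
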